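/- arXiv:2006.04095 — 9 statements merged into one kernel-verified Lean document; each statement's English description precedes it below -/
import Mathlib

section
/- Let n ≥ 1 and 0 ≤ l ≤ n. For g in the real orthogonal group O(n), let Λ^l(g) denote the ℂ-linear endomorphism of the l-th exterior power ⋀^l(ℂ^n) induced, by functoriality of the exterior power, by the ℂ-linear map ℂ^n → ℂ^n of multiplication by the matrix g (real entries regarded as complex numbers). Then every ℂ-linear subspace W of ⋀^l(ℂ^n) satisfying Λ^l(g)(W) ⊆ W for all g ∈ O(n) equals {0} or all of ⋀^l(ℂ^n); that is, ⋀^l(ℂ^n) is an irreducible O(n)-module. -/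
open ExteriorAlgebra

namespace ExtIrred

variable (n l : ℕ)

/-- standard basis vector of `ℂⁿ`. -/
noncomputable def u (j : Fin n) : Fin n → ℂ := Pi.single j 1

/-- basic wedge of standard basis vectors, as element of the exterior power. -/
noncomputable def E (f : Fin l → Fin n) : ⋀[ℂ]^l (Fin n → ℂ) :=
  ⟨ιMulti ℂ l (fun i => u n (f i)), ιMulti_range ℂ l (Set.mem_range_self _)⟩

lemma coe_E (f : Fin l → Fin n) :
    (E n l f : ExteriorAlgebra ℂ (Fin n → ℂ)) = ιMulti ℂ l (fun i => u n (f i)) := rfl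

lemma E_eq_zero {f : Fin l → Fin n} (hf : ¬ Function.Injective f) : E n l f = 0 := by
  apply Subtype.ext
  rw [coe_E]
  apply AlternatingMap.map_eq_zero_of_not_injective
  intro h
  apply hf
  intro i i' hii'
  exact h (by simp only [hii'])

lemma span_E : Submodule.span ℂ (Set.range (E n l)) = ⊤ := by
  apply Submodule.map_injective_of_injective
    (Submodule.injective_subtype (⋀[ℂ]^l (Fin n → ℂ)))
  rw [Submodule.map_span, Submodule.map_top, Submodule.range_subtype]
  apply le_antisymm
  · rw [Submodule.span_le]
    rintro _ ⟨_, ⟨f, rfl⟩, rfl⟩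
    exact (E n l f).2
  · refine le_trans (le_of_eq (ιMulti_span_fixedDegree ℂ l).symm) (Submodule.span_le.2 ?_)
    rintro _ ⟨v, rfl⟩
    have hv : v = fun i => ∑ j, v i j • u n j := by
      funext i k
      simp [u, Pi.single_apply, Finset.sum_ite_eq]
    rw [hv]
    have h1 : (ιMulti ℂ l (M := Fin n → ℂ)).toMultilinearMap (fun i => ∑ j, v i j • u n j)
        = ∑ r : Fin l → Fin n, (ιMulti ℂ l).toMultilinearMap (fun i => v i (r i) • u n (r i)) :=
      MultilinearMap.map_sum _ _
    have h2 : ∀ r : Fin l → Fin n,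
        (ιMulti ℂ l).toMultilinearMap (fun i => v i (r i) • u n (r i))
        = (∏ i, v i (r i)) • (ιMulti ℂ l).toMultilinearMap (fun i => u n (r i)) := fun r =>
      MultilinearMap.map_smul_univ _ _ _
    show (ιMulti ℂ l (M := Fin n → ℂ)).toMultilinearMap (fun i => ∑ j, v i j • u n j) ∈ _
    rw [h1]
    apply Submodule.sum_mem
    intro r _
    rw [h2 r]
    apply Submodule.smul_mem
    apply Submodule.subset_span
    exact ⟨E n l r, Set.mem_range_self r, rfl⟩



/-- diagonal sign matrix -/
noncomputable def Dm (d : Fin n → Bool) : Matrix (Fin n) (Fin n) ℝ :=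
  Matrix.diagonal (fun j => if d j then 1 else -1)

lemma Dm_orth (d : Fin n → Bool) : (Dm n d).transpose * Dm n d = 1 := by
  rw [Dm, Matrix.diagonal_transpose, Matrix.diagonal_mul_diagonal]
  have : (fun j => (if d j then (1:ℝ) else -1) * (if d j then 1 else -1)) = fun _ => 1 := by
    funext j; rcases d j with _|_ <;> norm_num
  rw [this, Matrix.diagonal_one]

/-- character -/
noncomputable def χ (S : Finset (Fin n)) (d : Fin n → Bool) : ℂ :=
  ∏ j ∈ S, (if d j then (1:ℂ) else -1)

lemma Dm_mulVecLin (d : Fin n → Bool) (j : Fin n) :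
    ((Dm n d).map Complex.ofReal).mulVecLin (Pi.single j 1 : Fin n → ℂ) =
      (if d j then (1:ℂ) else -1) • (Pi.single j 1 : Fin n → ℂ) := by
  funext k
  simp only [Dm, Matrix.mulVecLin_apply]
  rw [Matrix.diagonal_map (by simp)]
  rw [Matrix.diagonal_mulVec_single]
  rcases eq_or_ne k j with rfl | hkj
  · simp [Pi.single_apply]
    rcases d k with _|_ <;> norm_num
  · simp [Pi.single_apply, hkj]

lemma chi_sq (S : Finset (Fin n)) (d : Fin n → Bool) : χ n S d * χ n S d = 1 := by
  rw [χ, ← Finset.prod_mul_distrib]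
  apply Finset.prod_eq_one
  intro j _
  rcases d j with _|_ <;> norm_num

lemma chi_update (S : Finset (Fin n)) (d : Fin n → Bool) (j0 : Fin n) :
    χ n S (Function.update d j0 (!d j0)) = (if j0 ∈ S then -1 else 1) * χ n S d := by
  by_cases hj0 : j0 ∈ S
  · rw [if_pos hj0, χ, χ, ← Finset.mul_prod_erase _ _ hj0, ← Finset.mul_prod_erase _ _ hj0]
    have h1 : ∏ j ∈ S.erase j0, (if (Function.update d j0 (!d j0)) j then (1:ℂ) else -1)
        = ∏ j ∈ S.erase j0, (if d j then (1:ℂ) else -1) := by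
      apply Finset.prod_congr rfl
      intro j hj
      rw [Function.update_of_ne (Finset.ne_of_mem_erase hj)]
    rw [h1, Function.update_self]
    rcases d j0 with _|_ <;> norm_num [mul_assoc]
  · rw [if_neg hj0, one_mul, χ, χ]
    apply Finset.prod_congr rfl
    intro j hj
    rw [Function.update_of_ne (fun h => hj0 (by rw [← h]; exact hj))]

lemma chi_orth_self (S : Finset (Fin n)) :
    ∑ d : Fin n → Bool, χ n S d * χ n S d = (2:ℂ)^n := by
  have : ∀ d : Fin n → Bool, χ n S d * χ n S d = 1 := chi_sq n S
  rw [Finset.sum_congr rfl (fun d _ => this d), Finset.sum_const]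
  simp [Finset.card_univ]

lemma chi_orth (S T : Finset (Fin n)) (hST : S ≠ T) :
    ∑ d : Fin n → Bool, χ n S d * χ n T d = 0 := by
  obtain ⟨j0, hj0⟩ : ∃ j0, (j0 ∈ S ∧ j0 ∉ T) ∨ (j0 ∈ T ∧ j0 ∉ S) := by
    by_contra h
    push_neg at h
    apply hST
    ext j
    have := h j
    tauto
  apply Finset.sum_ninvolution (fun d => Function.update d j0 (!d j0))
  · intro d
    rw [chi_update, chi_update]
    rcases hj0 with ⟨h1, h2⟩ | ⟨h1, h2⟩ <;>
      simp only [if_pos h1, if_neg h2] <;> ring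
  · intro d _ heq
    have := congrFun heq j0
    rw [Function.update_self] at this
    exact (Bool.not_ne_self (d j0)) this
  · intro d; exact Finset.mem_univ _
  · intro d
    funext j
    rcases eq_or_ne j j0 with rfl | hj
    · simp
    · simp [Function.update_of_ne hj]

/-- permutation matrix -/
noncomputable def Pm (π : Equiv.Perm (Fin n)) : Matrix (Fin n) (Fin n) ℝ :=
  Matrix.of fun i j => if π j = i then 1 else 0

lemma Pm_orth (π : Equiv.Perm (Fin n)) : (Pm n π).transpose * Pm n π = 1 := by
  ext a b
  simp only [Matrix.mul_apply, Matrix.transpose_apply, Pm, Matrix.of_apply, Matrix.one_apply]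
  rw [Finset.sum_congr rfl (fun k _ => by rw [ite_mul, one_mul, zero_mul])]
  rcases eq_or_ne a b with rfl | hab
  · simp [Finset.sum_ite_eq' Finset.univ (π a) (fun _ => (1:ℝ))]
  · have : ∀ k, (if π a = k then (if π b = k then (1:ℝ) else 0) else 0) = 0 := by
      intro k
      rcases eq_or_ne (π a) k with rfl | h
      · rw [if_pos rfl, if_neg (fun h' => hab (π.injective (h'.symm)))]
      · rw [if_neg h]
    rw [Finset.sum_congr rfl (fun k _ => this k), Finset.sum_const, if_neg hab]
    simp

lemma Pm_mulVecLin (π : Equiv.Perm (Fin n)) (j : Fin n) :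
    ((Pm n π).map Complex.ofReal).mulVecLin (u n j) = u n (π j) := by
  funext k
  simp only [Matrix.mulVecLin_apply, u, Matrix.mulVec_single, Matrix.map_apply, Pm,
    Matrix.of_apply, mul_one, Pi.single_apply]
  rcases eq_or_ne k (π j) with rfl | hk
  · simp
  · simp [Ne.symm hk, hk]

/-- reindexing: any injective wedge with image S is a multiple of the canonical one. -/
lemma E_reindex (S : Finset (Fin n)) (hS : S.card = l) (f : Fin l → Fin n)
    (hf : Function.Injective f) (himg : Finset.image f Finset.univ = S) :
    ∃ c : ℂ, c ≠ 0 ∧ E n l f = c • E n l (fun i => (S.orderIsoOfFin hS i : Fin n)) := by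
  set fS : Fin l → Fin n := fun i => (S.orderIsoOfFin hS i : Fin n) with hfS
  have hmem : ∀ i, f i ∈ S := by
    intro i
    rw [← himg]
    exact Finset.mem_image_of_mem f (Finset.mem_univ i)
  set σ : Fin l → Fin l := fun i => (S.orderIsoOfFin hS).symm ⟨f i, hmem i⟩ with hσ
  have hcomp : ∀ i, fS (σ i) = f i := by
    intro i
    show ((S.orderIsoOfFin hS) ((S.orderIsoOfFin hS).symm ⟨f i, hmem i⟩) : Fin n) = f i
    rw [OrderIso.apply_symm_apply]
  have hσinj : Function.Injective σ := by
    intro i i' h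
    apply hf
    rw [← hcomp i, ← hcomp i', h]
  have hσbij : Function.Bijective σ := (Finite.injective_iff_bijective).1 hσinj
  set σe : Equiv.Perm (Fin l) := Equiv.ofBijective σ hσbij with hσe
  refine ⟨((Equiv.Perm.sign σe : ℤ) : ℂ), by
    rcases Int.units_eq_one_or (Equiv.Perm.sign σe) with h | h <;> simp [h], ?_⟩
  apply Subtype.ext
  show ιMulti ℂ l (fun i => u n (f i)) = _
  have : (fun i => u n (f i)) = (fun i => u n (fS i)) ∘ σe := by
    funext i
    simp only [Function.comp_apply, hσe, Equiv.ofBijective_apply, hcomp]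
  rw [this, AlternatingMap.map_perm, Submodule.coe_smul, Int.cast_smul_eq_zsmul ℂ,
    Units.smul_def]
  rfl

lemma exists_perm_image (S T : Finset (Fin n)) (h : S.card = T.card) :
    ∃ π : Equiv.Perm (Fin n), Finset.image (fun j => π j) S = T := by
  classical
  have hc : Sᶜ.card = Tᶜ.card := by
    rw [Finset.card_compl, Finset.card_compl, h]
  obtain ⟨e1⟩ : Nonempty ((S : Finset (Fin n)) ≃ (T : Finset (Fin n))) := by
    apply Fintype.card_eq.1
    simp [h]
  obtain ⟨e2⟩ : Nonempty ((Sᶜ : Finset (Fin n)) ≃ (Tᶜ : Finset (Fin n))) := by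
    apply Fintype.card_eq.1
    simp [h]
  let eS : {x // x ∈ S} ⊕ {x // x ∉ S} ≃ Fin n :=
    (Equiv.sumCongr (Equiv.refl _) (Equiv.subtypeEquivRight (fun x => by simp))).trans
      (Equiv.sumCompl (· ∈ S))
  let eT : {x // x ∈ T} ⊕ {x // x ∉ T} ≃ Fin n :=
    (Equiv.sumCongr (Equiv.refl _) (Equiv.subtypeEquivRight (fun x => by simp))).trans
      (Equiv.sumCompl (· ∈ T))
  let e2' : {x // x ∉ S} ≃ {x // x ∉ T} :=
    ((Equiv.subtypeEquivRight (fun x => by simp [Finset.mem_compl])).symm.trans e2).trans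
      (Equiv.subtypeEquivRight (fun x => by simp [Finset.mem_compl]))
  let π : Equiv.Perm (Fin n) := (eS.symm.trans (Equiv.sumCongr e1 e2')).trans eT
  have hπ : ∀ j (hj : j ∈ S), π j = (e1 ⟨j, hj⟩ : Fin n) := by
    intro j hj
    show eT ((Equiv.sumCongr e1 e2') (eS.symm j)) = _
    have : eS.symm j = Sum.inl ⟨j, hj⟩ := by
      apply eS.injective
      rw [Equiv.apply_symm_apply]
      show _ = eS (Sum.inl ⟨j, hj⟩)
      simp [eS]
    rw [this]
    simp [eT]
  refine ⟨π, ?_⟩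
  apply Finset.eq_of_subset_of_card_le
  · intro t ht
    obtain ⟨j, hj, rfl⟩ := Finset.mem_image.1 ht
    rw [hπ j hj]
    exact (e1 ⟨j, hj⟩).2
  · rw [Finset.card_image_of_injective _ π.injective, h]
end ExtIrred

set_option maxHeartbeats 2000000 in
/-- Irreducibility of `⋀^l(ℂ^n)` as an `O(n)`-module: any subspace invariant under all the
induced maps `Λ^l(g)`, for `g` in the real orthogonal group, is `{0}` or everything. -/
theorem exteriorPower_orthogonal_irreducible
    (n l : ℕ) (hn : 1 ≤ n) (hl : l ≤ n)
    (Λ : Matrix (Fin n) (Fin n) ℝ →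
      ((⋀[ℂ]^l (Fin n → ℂ)) →ₗ[ℂ] (⋀[ℂ]^l (Fin n → ℂ))))
    (hΛ : ∀ g : Matrix (Fin n) (Fin n) ℝ, g.transpose * g = 1 →
      ∀ x : ⋀[ℂ]^l (Fin n → ℂ),
        ((Λ g x : ExteriorAlgebra ℂ (Fin n → ℂ))) =
          ExteriorAlgebra.map ((g.map (Complex.ofReal)).mulVecLin)
            (x : ExteriorAlgebra ℂ (Fin n → ℂ)))
    (W : Submodule ℂ (⋀[ℂ]^l (Fin n → ℂ)))
    (hW : ∀ g : Matrix (Fin n) (Fin n) ℝ, g.transpose * g = 1 →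
      ∀ w ∈ W, Λ g w ∈ W) :
    W = ⊥ ∨ W = ⊤ := by
  classical
  by_cases hbot : W = ⊥
  · exact Or.inl hbot
  right
  -- notation
  set E := ExtIrred.E n l with hE
  set b : (S : Finset (Fin n)) → S.card = l → ⋀[ℂ]^l (Fin n → ℂ) :=
    fun S hS => E (fun i => (S.orderIsoOfFin hS i : Fin n)) with hb
  have hEzero : ∀ {f : Fin l → Fin n}, ¬Function.Injective f → E f = 0 :=
    fun hf => ExtIrred.E_eq_zero n l hf
  have hre : ∀ (S : Finset (Fin n)) (hS : S.card = l) (f : Fin l → Fin n),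
      Function.Injective f → Finset.image f Finset.univ = S →
      ∃ c : ℂ, c ≠ 0 ∧ E f = c • b S hS :=
    fun S hS f hf himg => ExtIrred.E_reindex n l S hS f hf himg
  have hcoeE : ∀ f : Fin l → Fin n,
      (E f : ExteriorAlgebra ℂ (Fin n → ℂ)) = ιMulti ℂ l (fun i => ExtIrred.u n (f i)) :=
    fun f => rfl
  have hspanE : Submodule.span ℂ (Set.range E) = ⊤ := ExtIrred.span_E n l
  -- canonical maps have image S
  have himgb : ∀ (S : Finset (Fin n)) (hS : S.card = l),
      Function.Injective (fun i => (S.orderIsoOfFin hS i : Fin n)) ∧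
      Finset.image (fun i => (S.orderIsoOfFin hS i : Fin n)) Finset.univ = S := by
    intro S hS
    have hinj : Function.Injective (fun i => (S.orderIsoOfFin hS i : Fin n)) := by
      intro i i' h
      exact (S.orderIsoOfFin hS).injective (Subtype.ext h)
    refine ⟨hinj, ?_⟩
    apply Finset.eq_of_subset_of_card_le
    · intro t ht
      obtain ⟨i, _, rfl⟩ := Finset.mem_image.1 ht
      exact (S.orderIsoOfFin hS i).2
    · rw [Finset.card_image_of_injective _ hinj, Finset.card_univ, Fintype.card_fin, hS]
  -- action of diagonal sign matrices
  have hΛD : ∀ (d : Fin n → Bool) (f : Fin l → Fin n), Function.Injective f →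
      Λ (ExtIrred.Dm n d) (E f) =
        ExtIrred.χ n (Finset.image f Finset.univ) d • E f := by
    intro d f hf
    apply Subtype.ext
    rw [Submodule.coe_smul]
    rw [hΛ _ (ExtIrred.Dm_orth n d), hcoeE, map_apply_ιMulti]
    have hc : (((ExtIrred.Dm n d).map Complex.ofReal).mulVecLin ∘ fun i => ExtIrred.u n (f i))
        = fun i => (if d (f i) then (1:ℂ) else -1) • ExtIrred.u n (f i) := by
      funext i
      exact ExtIrred.Dm_mulVecLin n d (f i)
    rw [hc]
    have hsmul : ιMulti ℂ l (fun i => (if d (f i) then (1:ℂ) else -1) • ExtIrred.u n (f i))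
        = (∏ i, (if d (f i) then (1:ℂ) else -1)) • ιMulti ℂ l (fun i => ExtIrred.u n (f i)) :=
      MultilinearMap.map_smul_univ (ιMulti ℂ l).toMultilinearMap _ _
    rw [hsmul]
    congr 1
    rw [ExtIrred.χ, Finset.prod_image (fun i _ i' _ h => hf h)]
  -- the projections
  set P : Finset (Fin n) → ((⋀[ℂ]^l (Fin n → ℂ)) →ₗ[ℂ] (⋀[ℂ]^l (Fin n → ℂ))) :=
    fun S => ((2:ℂ)^n)⁻¹ • ∑ d : Fin n → Bool, ExtIrred.χ n S d • Λ (ExtIrred.Dm n d) with hP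
  have h2n : ((2:ℂ)^n) ≠ 0 := pow_ne_zero _ two_ne_zero
  have hPapply : ∀ S x, P S x =
      ((2:ℂ)^n)⁻¹ • ∑ d : Fin n → Bool, ExtIrred.χ n S d • Λ (ExtIrred.Dm n d) x := by
    intro S x
    simp [hP, LinearMap.sum_apply]
  have hPW : ∀ S, ∀ w ∈ W, P S w ∈ W := by
    intro S w hw
    rw [hPapply]
    exact Submodule.smul_mem _ _ (Submodule.sum_mem _ fun d _ =>
      Submodule.smul_mem _ _ (hW _ (ExtIrred.Dm_orth n d) w hw))
  have hPEinj : ∀ S (f : Fin l → Fin n), Function.Injective f →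
      P S (E f) = if Finset.image f Finset.univ = S then E f else 0 := by
    intro S f hf
    rw [hPapply]
    have : ∀ d : Fin n → Bool, ExtIrred.χ n S d • Λ (ExtIrred.Dm n d) (E f)
        = (ExtIrred.χ n S d * ExtIrred.χ n (Finset.image f Finset.univ) d) • E f := by
      intro d
      rw [hΛD d f hf, smul_smul]
    rw [Finset.sum_congr rfl (fun d _ => this d), ← Finset.sum_smul]
    rcases eq_or_ne (Finset.image f Finset.univ) S with heq | hne
    · rw [if_pos heq, heq, ExtIrred.chi_orth_self, smul_smul, inv_mul_cancel₀ h2n, one_smul]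
    · rw [if_neg hne, ExtIrred.chi_orth n S _ (fun h => hne h.symm), zero_smul, smul_zero]
  have hPE : ∀ S (f : Fin l → Fin n),
      P S (E f) = if Function.Injective f ∧ Finset.image f Finset.univ = S then E f else 0 := by
    intro S f
    by_cases hf : Function.Injective f
    · rw [hPEinj S f hf]
      by_cases h : Finset.image f Finset.univ = S
      · rw [if_pos h, if_pos ⟨hf, h⟩]
      · rw [if_neg h, if_neg (fun hh => h hh.2)]
    · rw [hEzero hf, map_zero, if_neg (fun hh => hf hh.1)]
  -- the projections sum to the identity
  have hsum : ∀ x : ⋀[ℂ]^l (Fin n → ℂ), ∑ S : Finset (Fin n), P S x = x := by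
    have : (∑ S : Finset (Fin n), P S) = LinearMap.id := by
      apply LinearMap.ext_on hspanE
      rintro _ ⟨f, rfl⟩
      rw [LinearMap.sum_apply, LinearMap.id_apply,
        Finset.sum_congr rfl (fun S _ => hPE S f)]
      by_cases hf : Function.Injective f
      · simp [hf]
      · rw [Finset.sum_congr rfl (fun S _ => if_neg (fun hh => hf hh.1)),
          Finset.sum_const, smul_zero, hEzero hf]
    intro x
    rw [← LinearMap.sum_apply, this, LinearMap.id_apply]
  -- range of each projection is contained in a line
  have hrange : ∀ (S : Finset (Fin n)) (hS : S.card = l) (x : ⋀[ℂ]^l (Fin n → ℂ)),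
      P S x ∈ Submodule.span ℂ {b S hS} := by
    intro S hS x
    have hx : x ∈ Submodule.span ℂ (Set.range E) := by
      rw [hspanE]; exact Submodule.mem_top
    have : P S x ∈ Submodule.map (P S) (Submodule.span ℂ (Set.range E)) :=
      Submodule.mem_map_of_mem hx
    rw [Submodule.map_span] at this
    refine Submodule.span_le.2 ?_ this
    rintro _ ⟨_, ⟨f, rfl⟩, rfl⟩
    rw [hPE]
    by_cases h : Function.Injective f ∧ Finset.image f Finset.univ = S
    · rw [if_pos h]
      obtain ⟨c, _, hc⟩ := hre S hS f h.1 h.2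
      rw [hc]
      exact Submodule.smul_mem _ _ (Submodule.mem_span_singleton_self _)
    · rw [if_neg h]
      exact Submodule.zero_mem _
  -- get one basis vector into W
  obtain ⟨x, hxW, hx0⟩ := Submodule.ne_bot_iff W |>.1 hbot
  obtain ⟨S, hPSx⟩ : ∃ S : Finset (Fin n), P S x ≠ 0 := by
    by_contra h
    push_neg at h
    apply hx0
    rw [← hsum x, Finset.sum_congr rfl (fun S _ => h S), Finset.sum_const, smul_zero]
  have hScard : S.card = l := by
    by_contra hcard
    apply hPSx
    have hpz : P S = 0 := by
      apply LinearMap.ext_on hspanE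
      rintro _ ⟨f, rfl⟩
      rw [hPE, LinearMap.zero_apply]
      apply if_neg
      rintro ⟨hf, himg⟩
      apply hcard
      rw [← himg, Finset.card_image_of_injective _ hf, Finset.card_univ, Fintype.card_fin]
    rw [hpz, LinearMap.zero_apply]
  have hbSW : b S hScard ∈ W := by
    obtain ⟨c, hc⟩ := Submodule.mem_span_singleton.1 (hrange S hScard x)
    have hcne : c ≠ 0 := by
      rintro rfl
      rw [zero_smul] at hc
      exact hPSx hc.symm
    have : b S hScard = c⁻¹ • P S x := by
      rw [← hc, smul_smul, inv_mul_cancel₀ hcne, one_smul]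
    rw [this]
    exact Submodule.smul_mem _ _ (hPW S x hxW)
  -- all basis vectors are in W
  have hbTW : ∀ (T : Finset (Fin n)) (hT : T.card = l), b T hT ∈ W := by
    intro T hT
    obtain ⟨π, hπ⟩ := ExtIrred.exists_perm_image n S T (hScard.trans hT.symm)
    set fS : Fin l → Fin n := fun i => (S.orderIsoOfFin hScard i : Fin n) with hfS
    have hΛP : Λ (ExtIrred.Pm n π) (b S hScard) = E (fun i => π (fS i)) := by
      apply Subtype.ext
      rw [hΛ _ (ExtIrred.Pm_orth n π)]
      have hcb : ((b S hScard : ⋀[ℂ]^l (Fin n → ℂ)) : ExteriorAlgebra ℂ (Fin n → ℂ))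
          = ιMulti ℂ l (fun i => ExtIrred.u n (fS i)) := rfl
      rw [hcb, map_apply_ιMulti, hcoeE]
      congr 1
      funext i
      exact ExtIrred.Pm_mulVecLin n π (fS i)
    have hmemW : Λ (ExtIrred.Pm n π) (b S hScard) ∈ W :=
      hW _ (ExtIrred.Pm_orth n π) _ hbSW
    rw [hΛP] at hmemW
    have hinj : Function.Injective (fun i => π (fS i)) :=
      π.injective.comp (himgb S hScard).1
    have himg : Finset.image (fun i => π (fS i)) Finset.univ = T := by
      have : Finset.image (fun i => π (fS i)) Finset.univ
          = Finset.image (fun j => π j) (Finset.image fS Finset.univ) := by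
        rw [Finset.image_image]
        rfl
      rw [this, (himgb S hScard).2, hπ]
    obtain ⟨c, hcne, hc⟩ := hre T hT _ hinj himg
    rw [hc] at hmemW
    have : b T hT = c⁻¹ • (c • b T hT) := by
      rw [smul_smul, inv_mul_cancel₀ hcne, one_smul]
    rw [this]
    exact Submodule.smul_mem _ _ hmemW
  -- conclude
  rw [eq_top_iff, ← hspanE]
  apply Submodule.span_le.2
  rintro _ ⟨f, rfl⟩
  by_cases hf : Function.Injective f
  · have hcard : (Finset.image f Finset.univ).card = l := by
      rw [Finset.card_image_of_injective _ hf, Finset.card_univ, Fintype.card_fin]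
    obtain ⟨c, _, hc⟩ := hre _ hcard f hf rfl
    rw [hc]
    exact Submodule.smul_mem _ _ (hbTW _ hcard)
  · rw [hEzero hf]
    exact Submodule.zero_mem _
end

section
/- Let n ≥ 1 and let 0 ≤ l, l' ≤ n with l ≠ l'. For g in the real orthogonal group O(n), let Λ^l(g) denote the ℂ-linear endomorphism of ⋀^l(ℂ^n) induced, by functoriality of the exterior power, by multiplication by g on ℂ^n. Then every ℂ-linear map T : ⋀^l(ℂ^n) → ⋀^{l'}(ℂ^n) satisfying T ∘ Λ^l(g) = Λ^{l'}(g) ∘ T for all g ∈ O(n) is the zero map; that is, ⋀^l(ℂ^n) and ⋀^{l'}(ℂ^n) are non-isomorphic O(n)-modules. -/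
open ExteriorAlgebra

private lemma extAux_expand (n m : ℕ) (v : Fin m → (Fin n → ℂ)) :
    ιMulti ℂ m v = ∑ f : Fin m → Fin n, (∏ i, v i (f i)) •
      ιMulti ℂ m (fun i => (Pi.single (f i) 1 : Fin n → ℂ)) := by
  have hv : v = fun i => ∑ j, v i j • (Pi.single j 1 : Fin n → ℂ) := by
    funext i; ext k
    simp [Pi.single_apply, Finset.sum_apply, mul_ite]
  conv_lhs => rw [hv]
  rw [show ιMulti ℂ m (fun i => ∑ j, v i j • (Pi.single j 1 : Fin n → ℂ)) =
    (ιMulti ℂ m).toMultilinearMap (fun i => ∑ j, v i j • (Pi.single j 1 : Fin n → ℂ)) from rfl]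
  rw [MultilinearMap.map_sum]
  congr 1
  funext f
  rw [MultilinearMap.map_smul_univ]
  rfl

private lemma extAux_span (n m : ℕ) :
    (⋀[ℂ]^m (Fin n → ℂ) : Submodule ℂ (ExteriorAlgebra ℂ (Fin n → ℂ))) ≤
      Submodule.span ℂ (Set.range fun f : Fin m → Fin n =>
        ιMulti ℂ m (fun i => (Pi.single (f i) 1 : Fin n → ℂ))) := by
  rw [← ιMulti_span_fixedDegree]
  refine Submodule.span_le.2 ?_
  rintro _ ⟨v, rfl⟩
  rw [extAux_expand]
  exact Submodule.sum_mem _ fun f _ =>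
    Submodule.smul_mem _ _ (Submodule.subset_span ⟨f, rfl⟩)

private lemma extAux_orth (n : ℕ) (ε : Fin n → Bool) :
    (Matrix.diagonal (fun j => if ε j then (-1:ℝ) else 1)).transpose *
      (Matrix.diagonal (fun j => if ε j then (-1:ℝ) else 1)) = 1 := by
  rw [Matrix.diagonal_transpose, Matrix.diagonal_mul_diagonal]
  have : (fun j => (if ε j then (-1:ℝ) else 1) * (if ε j then (-1:ℝ) else 1)) =
      fun _ => (1:ℝ) := by
    funext j; by_cases h : ε j <;> simp [h]
  rw [this, Matrix.diagonal_one]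

private lemma extAux_act (n m : ℕ) (ε : Fin n → Bool) (f : Fin m → Fin n) :
    ExteriorAlgebra.map (((Matrix.diagonal (fun j => if ε j then (-1:ℝ) else 1)).map
      Complex.ofReal).mulVecLin)
      (ιMulti ℂ m (fun i => (Pi.single (f i) 1 : Fin n → ℂ))) =
    (∏ i, if ε (f i) then (-1:ℂ) else 1) •
      ιMulti ℂ m (fun i => (Pi.single (f i) 1 : Fin n → ℂ)) := by
  rw [map_apply_ιMulti]
  have h : (((Matrix.diagonal (fun j => if ε j then (-1:ℝ) else 1)).map
      Complex.ofReal).mulVecLin) ∘ (fun i => (Pi.single (f i) 1 : Fin n → ℂ)) =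
      fun i => (if ε (f i) then (-1:ℂ) else 1) • (Pi.single (f i) 1 : Fin n → ℂ) := by
    funext i
    show (((Matrix.diagonal fun j => if ε j then (-1:ℝ) else 1).map Complex.ofReal).mulVecLin)
      (Pi.single (f i) 1 : Fin n → ℂ) = _
    ext k
    simp [Matrix.mulVecLin, Matrix.mulVec_single, Matrix.diagonal_apply, Pi.single_apply,
      apply_ite]
    by_cases h : k = f i <;> by_cases h2 : ε k <;> simp_all [ite_apply, Pi.single_apply]
  rw [h]
  exact (ιMulti ℂ m).toMultilinearMap.map_smul_univ _ _

private lemma extAux_count (n l l' : ℕ) (hll' : l ≠ l')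
    (f : Fin l → Fin n) (hf : Function.Injective f)
    (f' : Fin l' → Fin n) (hf' : Function.Injective f') :
    ∑ ε : Fin n → Bool, (∏ i, if ε (f i) then (-1:ℂ) else 1) *
      (∏ i, if ε (f' i) then (-1:ℂ) else 1) = 0 := by
  set S := Finset.image f Finset.univ with hS
  set S' := Finset.image f' Finset.univ with hS'
  have hSf : ∀ ε : Fin n → Bool, (∏ i, if ε (f i) then (-1:ℂ) else 1) =
      ∏ j ∈ S, (if ε j then (-1:ℂ) else 1) := fun ε => by
    rw [hS, Finset.prod_image (fun a _ b _ h => hf h)]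
  have hSf' : ∀ ε : Fin n → Bool, (∏ i, if ε (f' i) then (-1:ℂ) else 1) =
      ∏ j ∈ S', (if ε j then (-1:ℂ) else 1) := fun ε => by
    rw [hS', Finset.prod_image (fun a _ b _ h => hf' h)]
  have hSS' : S ≠ S' := by
    intro h
    apply hll'
    have h1 : S.card = l := by
      rw [hS, Finset.card_image_of_injective _ hf, Finset.card_univ, Fintype.card_fin]
    have h2 : S'.card = l' := by
      rw [hS', Finset.card_image_of_injective _ hf', Finset.card_univ, Fintype.card_fin]
    rw [← h1, ← h2, h]
  obtain ⟨j0, hj0⟩ : ∃ j0, ¬ (j0 ∈ S ↔ j0 ∈ S') := by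
    by_contra h
    push_neg at h
    exact hSS' (Finset.ext fun j => h j)
  calc ∑ ε : Fin n → Bool, (∏ i, if ε (f i) then (-1:ℂ) else 1) *
      (∏ i, if ε (f' i) then (-1:ℂ) else 1)
      = ∑ ε : Fin n → Bool, ∏ j, ((if j ∈ S then (if ε j then (-1:ℂ) else 1) else 1) *
          (if j ∈ S' then (if ε j then (-1:ℂ) else 1) else 1)) := by
        refine Finset.sum_congr rfl fun ε _ => ?_
        rw [hSf, hSf', Finset.prod_mul_distrib]
        congr 1 <;> rw [Finset.prod_ite_mem, Finset.univ_inter]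
    _ = ∏ j, ∑ b : Bool, ((if j ∈ S then (if b then (-1:ℂ) else 1) else 1) *
          (if j ∈ S' then (if b then (-1:ℂ) else 1) else 1)) := by
        rw [Finset.prod_univ_sum, ← Fintype.piFinset_univ]
    _ = 0 := by
        apply Finset.prod_eq_zero (Finset.mem_univ j0)
        rw [Fintype.sum_bool]
        by_cases h1 : j0 ∈ S <;> by_cases h2 : j0 ∈ S' <;> simp_all

set_option maxHeartbeats 1000000 in
/-- For `l ≠ l'`, the exterior powers `⋀^l(ℂ^n)` and `⋀^{l'}(ℂ^n)` are non-isomorphic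
`O(n)`-modules: any linear map intertwining the induced actions of the real orthogonal
group is zero. -/
theorem exteriorPower_orthogonal_nonisomorphic
    (n l l' : ℕ) (hn : 1 ≤ n) (hl : l ≤ n) (hl' : l' ≤ n) (hll' : l ≠ l')
    (Λ : Matrix (Fin n) (Fin n) ℝ →
      ((⋀[ℂ]^l (Fin n → ℂ)) →ₗ[ℂ] (⋀[ℂ]^l (Fin n → ℂ))))
    (hΛ : ∀ g : Matrix (Fin n) (Fin n) ℝ, g.transpose * g = 1 →
      ∀ x : ⋀[ℂ]^l (Fin n → ℂ),
        ((Λ g x : ExteriorAlgebra ℂ (Fin n → ℂ))) =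
          ExteriorAlgebra.map ((g.map (Complex.ofReal)).mulVecLin)
            (x : ExteriorAlgebra ℂ (Fin n → ℂ)))
    (Λ' : Matrix (Fin n) (Fin n) ℝ →
      ((⋀[ℂ]^l' (Fin n → ℂ)) →ₗ[ℂ] (⋀[ℂ]^l' (Fin n → ℂ))))
    (hΛ' : ∀ g : Matrix (Fin n) (Fin n) ℝ, g.transpose * g = 1 →
      ∀ x : ⋀[ℂ]^l' (Fin n → ℂ),
        ((Λ' g x : ExteriorAlgebra ℂ (Fin n → ℂ))) =
          ExteriorAlgebra.map ((g.map (Complex.ofReal)).mulVecLin)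
            (x : ExteriorAlgebra ℂ (Fin n → ℂ)))
    (T : (⋀[ℂ]^l (Fin n → ℂ)) →ₗ[ℂ] (⋀[ℂ]^l' (Fin n → ℂ)))
    (hT : ∀ g : Matrix (Fin n) (Fin n) ℝ, g.transpose * g = 1 →
      T ∘ₗ Λ g = Λ' g ∘ₗ T) :
    T = 0 := by
  -- abbreviation for the diagonal sign matrices
  set G : (Fin n → Bool) → Matrix (Fin n) (Fin n) ℝ :=
    fun ε => Matrix.diagonal (fun j => if ε j then (-1:ℝ) else 1) with hG
  have horth : ∀ ε : Fin n → Bool, (G ε).transpose * (G ε) = 1 := fun ε => extAux_orth n ε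
  have hGact : ∀ (m : ℕ) (ε : Fin n → Bool) (f : Fin m → Fin n),
      ExteriorAlgebra.map (((G ε).map Complex.ofReal).mulVecLin)
        (ιMulti ℂ m (fun i => (Pi.single (f i) 1 : Fin n → ℂ))) =
      (∏ i, if ε (f i) then (-1:ℂ) else 1) •
        ιMulti ℂ m (fun i => (Pi.single (f i) 1 : Fin n → ℂ)) :=
    fun m ε f => extAux_act n m ε f
  -- key step: T kills every generator coming from a tuple of standard basis vectors
  have key : ∀ (f : Fin l → Fin n)
      (hx : ιMulti ℂ l (fun i => (Pi.single (f i) 1 : Fin n → ℂ)) ∈ ⋀[ℂ]^l (Fin n → ℂ)),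
      T ⟨_, hx⟩ = 0 := by
    intro f hx
    by_cases hfinj : Function.Injective f
    · set x : ⋀[ℂ]^l (Fin n → ℂ) := ⟨_, hx⟩ with hxdef
      -- eigenvalue equation for T x
      have heig : ∀ ε : Fin n → Bool,
          ExteriorAlgebra.map (((G ε).map Complex.ofReal).mulVecLin)
            ((T x : ⋀[ℂ]^l' (Fin n → ℂ)) : ExteriorAlgebra ℂ (Fin n → ℂ)) =
          (∏ i, if ε (f i) then (-1:ℂ) else 1) •
            ((T x : ⋀[ℂ]^l' (Fin n → ℂ)) : ExteriorAlgebra ℂ (Fin n → ℂ)) := by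
        intro ε
        have h1 : Λ (G ε) x = (∏ i, if ε (f i) then (-1:ℂ) else 1) • x := by
          refine Subtype.coe_injective ?_
          show ((Λ (G ε) x : ⋀[ℂ]^l (Fin n → ℂ)) : ExteriorAlgebra ℂ (Fin n → ℂ)) =
            ((((∏ i, if ε (f i) then (-1:ℂ) else 1) • x : ⋀[ℂ]^l (Fin n → ℂ))) :
              ExteriorAlgebra ℂ (Fin n → ℂ))
          rw [SetLike.val_smul, hΛ (G ε) (horth ε) x]
          exact hGact l ε f
        have h2 : T (Λ (G ε) x) = Λ' (G ε) (T x) := by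
          have := congrArg (fun m => m x) (hT (G ε) (horth ε))
          simpa using this
        rw [h1, map_smul] at h2
        have h3 := hΛ' (G ε) (horth ε) (T x)
        rw [← h2, SetLike.val_smul] at h3
        exact h3.symm
      -- the averaged operator vanishes on all of ⋀^{l'}
      have hL : ∀ z : ExteriorAlgebra ℂ (Fin n → ℂ), z ∈ ⋀[ℂ]^l' (Fin n → ℂ) →
          ∑ ε : Fin n → Bool, (∏ i, if ε (f i) then (-1:ℂ) else 1) •
            ExteriorAlgebra.map (((G ε).map Complex.ofReal).mulVecLin) z = 0 := by
        intro z hz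
        have hz' := extAux_span n l' hz
        clear hz
        induction hz' using Submodule.span_induction with
        | mem w hw =>
            obtain ⟨f', rfl⟩ := hw
            by_cases hfinj' : Function.Injective f'
            · have heach : ∀ ε : Fin n → Bool,
                  (∏ i, if ε (f i) then (-1:ℂ) else 1) •
                    ExteriorAlgebra.map (((G ε).map Complex.ofReal).mulVecLin)
                      (ιMulti ℂ l' (fun i => (Pi.single (f' i) 1 : Fin n → ℂ))) =
                  ((∏ i, if ε (f i) then (-1:ℂ) else 1) *
                    (∏ i, if ε (f' i) then (-1:ℂ) else 1)) •
                      ιMulti ℂ l' (fun i => (Pi.single (f' i) 1 : Fin n → ℂ)) := by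
                intro ε
                rw [hGact l' ε f', smul_smul]
              rw [Finset.sum_congr rfl fun ε _ => heach ε, ← Finset.sum_smul,
                extAux_count n l l' hll' f hfinj f' hfinj', zero_smul]
            · have h0 : ιMulti ℂ l' (fun i => (Pi.single (f' i) 1 : Fin n → ℂ)) = 0 := by
                obtain ⟨a, b, hab, hne⟩ := Function.not_injective_iff.1 hfinj'
                exact AlternatingMap.map_eq_zero_of_eq _ _ (by rw [hab]) hne
              simp [h0]
        | zero => simp
        | add a b _ _ ha hb =>
            simp only [map_add, smul_add, Finset.sum_add_distrib, ha, hb, add_zero]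
        | smul c a _ ha =>
            have hc : ∀ ε ∈ (Finset.univ : Finset (Fin n → Bool)),
                (∏ i, if ε (f i) then (-1:ℂ) else 1) •
                  ExteriorAlgebra.map (((G ε).map Complex.ofReal).mulVecLin) (c • a) =
                c • ((∏ i, if ε (f i) then (-1:ℂ) else 1) •
                  ExteriorAlgebra.map (((G ε).map Complex.ofReal).mulVecLin) a) := by
              intro ε _
              rw [map_smul, smul_comm]
            rw [Finset.sum_congr rfl hc, ← Finset.smul_sum, ha, smul_zero]
      -- combine
      have hcomb := hL ((T x : ⋀[ℂ]^l' (Fin n → ℂ)) : ExteriorAlgebra ℂ (Fin n → ℂ)) (T x).2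
      have hconst : ∀ ε ∈ (Finset.univ : Finset (Fin n → Bool)),
          (∏ i, if ε (f i) then (-1:ℂ) else 1) •
            ExteriorAlgebra.map (((G ε).map Complex.ofReal).mulVecLin)
              ((T x : ⋀[ℂ]^l' (Fin n → ℂ)) : ExteriorAlgebra ℂ (Fin n → ℂ)) =
          ((T x : ⋀[ℂ]^l' (Fin n → ℂ)) : ExteriorAlgebra ℂ (Fin n → ℂ)) := by
        intro ε _
        rw [heig ε, smul_smul, ← Finset.prod_mul_distrib]
        have hone : (∏ i, (if ε (f i) then (-1:ℂ) else 1) *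
            (if ε (f i) then (-1:ℂ) else 1)) = 1 := by
          apply Finset.prod_eq_one
          intro i _
          by_cases h : ε (f i) <;> simp [h]
        rw [hone, one_smul]
      rw [Finset.sum_congr rfl hconst, Finset.sum_const, Finset.card_univ] at hcomb
      have hcard : (0:ℕ) < Fintype.card (Fin n → Bool) := Fintype.card_pos
      have hy0 : ((T x : ⋀[ℂ]^l' (Fin n → ℂ)) : ExteriorAlgebra ℂ (Fin n → ℂ)) = 0 := by
        rw [← Nat.cast_smul_eq_nsmul ℂ] at hcomb
        exact (smul_eq_zero.1 hcomb).resolve_left (Nat.cast_ne_zero.2 hcard.ne')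
      exact Subtype.coe_injective hy0
    · have h0 : ιMulti ℂ l (fun i => (Pi.single (f i) 1 : Fin n → ℂ)) = 0 := by
        obtain ⟨a, b, hab, hne⟩ := Function.not_injective_iff.1 hfinj
        exact AlternatingMap.map_eq_zero_of_eq _ _ (by rw [hab]) hne
      have hx0 : (⟨_, hx⟩ : ⋀[ℂ]^l (Fin n → ℂ)) = 0 := Subtype.coe_injective h0
      rw [hx0, map_zero]
  -- conclude
  have hNle : Submodule.span ℂ (Set.range fun f : Fin l → Fin n =>
      ιMulti ℂ l (fun i => (Pi.single (f i) 1 : Fin n → ℂ))) ≤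
      Submodule.map (Submodule.subtype _) (LinearMap.ker T) := by
    refine Submodule.span_le.2 ?_
    rintro _ ⟨f, rfl⟩
    have hmem : ιMulti ℂ l (fun i => (Pi.single (f i) 1 : Fin n → ℂ)) ∈
        ⋀[ℂ]^l (Fin n → ℂ) := ιMulti_range ℂ l ⟨_, rfl⟩
    exact ⟨⟨_, hmem⟩, key f hmem, rfl⟩
  refine LinearMap.ext fun x => ?_
  obtain ⟨z, hz, hzx⟩ := hNle (extAux_span n l x.2)
  have hzx' : z = x := Subtype.coe_injective hzx
  rw [← hzx']
  simpa using hz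
end

section
/- For every t ∈ ℂ and every m ∈ ℕ_0: ∫_ℂ z^m · exp(−2π z·conj(z) + 2π i (z t + conj(z t))) d_ℂ z = (i · conj(t))^m · exp(−2π t·conj(t)). -/
set_option maxHeartbeats 1000000

open Real MeasureTheory ComplexConjugate Complex

noncomputable section

namespace GFCaux

/-- 1D Gaussian integral. -/
lemma base1 (c : ℂ) :
    ∫ x : ℝ, Complex.exp ((-(2*(π:ℂ))) * x ^ 2 + c * x)
      = ((π:ℂ) / (2*π)) ^ (1/2 : ℂ) * Complex.exp (c ^ 2 / (8*π)) := by
  have hb : (-(2*(π:ℂ))).re < 0 := by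
    simp [Real.pi_pos]
  have := integral_cexp_quadratic hb c 0
  simp only [add_zero, zero_sub] at this
  rw [this]
  congr 2
  · rw [neg_neg]
  · rw [show (4:ℂ) * -(2*(π:ℂ)) = -(8*π) by ring, div_neg, neg_neg]

/-- Gaussian integral over ℂ with general linear term. -/
lemma base (a b : ℂ) :
    (∫ z : ℂ, Complex.exp (-(2*(π:ℂ)*(z * conj z)) + (a * z + b * conj z)))
      = (1/2 : ℂ) * Complex.exp (a * b / (2*π)) := by
  have hπ : (π:ℂ) ≠ 0 := Complex.ofReal_ne_zero.2 Real.pi_ne_zero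
  rw [← (Complex.volume_preserving_equiv_real_prod.symm).integral_comp
    Complex.measurableEquivRealProd.symm.measurableEmbedding]
  have hsplit : ∀ p : ℝ × ℝ,
      Complex.exp (-(2*(π:ℂ)*((Complex.measurableEquivRealProd.symm p) * conj (Complex.measurableEquivRealProd.symm p))) + (a * (Complex.measurableEquivRealProd.symm p) + b * conj (Complex.measurableEquivRealProd.symm p)))
      = Complex.exp ((-(2*(π:ℂ))) * (p.1:ℂ) ^ 2 + (a+b) * (p.1:ℂ))
        * Complex.exp ((-(2*(π:ℂ))) * (p.2:ℂ) ^ 2 + ((a-b)*Complex.I) * (p.2:ℂ)) := by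
    intro p
    rw [Complex.measurableEquivRealProd_symm_apply]
    rw [← Complex.exp_add]
    congr 1
    rw [Complex.mk_eq_add_mul_I]
    simp only [map_add, map_mul, Complex.conj_ofReal, Complex.conj_I]
    linear_combination (2*(π:ℂ)*(p.2:ℂ)^2) * Complex.I_sq
  simp only [hsplit]
  rw [show (volume : Measure (ℝ×ℝ)) = (volume : Measure ℝ).prod volume from rfl,
    integral_prod_mul (f := fun u : ℝ => Complex.exp ((-(2*(π:ℂ))) * (u:ℂ) ^ 2 + (a+b) * (u:ℂ)))
      (g := fun u : ℝ => Complex.exp ((-(2*(π:ℂ))) * (u:ℂ) ^ 2 + ((a-b)*Complex.I) * (u:ℂ))),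
    base1, base1]
  have h2 : ((π:ℂ) / (2*π)) = 1/2 := by field_simp
  rw [h2]
  have h3 : ((1:ℂ)/2) ^ (1/2 : ℂ) * Complex.exp ((a+b) ^ 2 / (8*π)) *
      (((1:ℂ)/2) ^ (1/2 : ℂ) * Complex.exp (((a-b)*Complex.I) ^ 2 / (8*π)))
      = (((1:ℂ)/2) ^ (1/2 : ℂ) * ((1:ℂ)/2) ^ (1/2 : ℂ)) *
        (Complex.exp ((a+b) ^ 2 / (8*π)) * Complex.exp (((a-b)*Complex.I) ^ 2 / (8*π))) := by
    ring
  rw [h3, ← Complex.cpow_add _ _ (by norm_num : (1/2 : ℂ) ≠ 0), ← Complex.exp_add]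
  norm_num
  have hXY : (a + b)^2/(8*(π:ℂ)) + ((a-b)*Complex.I)^2/(8*(π:ℂ)) = a*b/(2*(π:ℂ)) := by
    rw [← add_div, div_eq_div_iff (by simp [hπ]) (by simp [hπ])]
    linear_combination (2*(π:ℂ)*(a-b)^2) * Complex.I_sq
  rw [hXY]

/-- Integrability of polynomially-weighted Gaussians on ℂ. -/
lemma integrable_gaussian_c :
    Integrable (fun z : ℂ => Real.exp (-π * ‖z‖^2)) := by
  have h := (GaussianFourier.integrable_cexp_neg_mul_sq_norm_add (V := ℂ) (b := (π:ℂ))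
    (by simpa using Real.pi_pos) 0 0).norm
  refine h.congr ?_
  filter_upwards with z
  simp [Complex.norm_exp, ← Complex.ofReal_pow]

lemma integrable_aux (k : ℕ) (c : ℝ) :
    Integrable (fun z : ℂ => ‖z‖ ^ k * Real.exp (-(2*π)*‖z‖^2 + c*‖z‖)) := by
  have hπ : (0:ℝ) < π := Real.pi_pos
  refine Integrable.mono' ((integrable_gaussian_c).const_mul (Real.exp ((c+k)^2/(4*π))))
    ?_ (Filter.Eventually.of_forall fun z => ?_)
  · apply Continuous.aestronglyMeasurable
    fun_prop
  · rw [Real.norm_eq_abs, _root_.abs_of_nonneg (by positivity)]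
    set r := ‖z‖ with hr
    have hr0 : 0 ≤ r := norm_nonneg z
    have h1 : r ^ k ≤ Real.exp ((k:ℝ) * r) := by
      calc r ^ k ≤ (Real.exp r) ^ k := pow_le_pow_left₀ hr0 (by linarith [Real.add_one_le_exp r]) k
      _ = Real.exp ((k:ℝ) * r) := by rw [← Real.exp_nat_mul]
    calc r ^ k * Real.exp (-(2*π)*r^2 + c*r)
        ≤ Real.exp ((k:ℝ)*r) * Real.exp (-(2*π)*r^2 + c*r) := by
          apply mul_le_mul_of_nonneg_right h1 (Real.exp_nonneg _)
      _ = Real.exp (-(2*π)*r^2 + (c+k)*r) := by rw [← Real.exp_add]; ring_nf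
      _ ≤ Real.exp ((c+k)^2/(4*π)) * Real.exp (-π * r^2) := by
          rw [← Real.exp_add, Real.exp_le_exp]
          have key : (c+(k:ℝ))*r - π*r^2 ≤ (c+(k:ℝ))^2/(4*π) := by
            rw [le_div_iff₀ (by positivity : (0:ℝ) < 4*π)]
            nlinarith [sq_nonneg ((c+(k:ℝ)) - 2*π*r)]
          linarith

lemma norm_aux (k : ℕ) (t x z : ℂ) :
    ‖z ^ k * Complex.exp (-(2*(π:ℂ)*(z * conj z)) +
        (2*(π:ℂ)*Complex.I*x * z + 2*(π:ℂ)*Complex.I*conj t * conj z))‖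
      ≤ ‖z‖ ^ k * Real.exp (-(2*π)*‖z‖^2 + (2*π*(‖t‖+‖x‖))*‖z‖) := by
  have hπ : (0:ℝ) < π := Real.pi_pos
  rw [norm_mul, norm_pow]
  apply mul_le_mul_of_nonneg_left _ (by positivity)
  rw [Complex.norm_exp, Real.exp_le_exp]
  have hre1 : (-(2*(π:ℂ)*(z * conj z))).re = -(2*π*‖z‖^2) := by
    rw [Complex.mul_conj,
      show ((2:ℂ)*(π:ℂ)*((Complex.normSq z : ℝ) : ℂ)) = ((2*π*Complex.normSq z : ℝ) : ℂ) by
        push_cast; ring,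
      Complex.neg_re, Complex.ofReal_re, Complex.normSq_eq_norm_sq]
  have hre2 : (2*(π:ℂ)*Complex.I*x * z).re ≤ 2*π*(‖x‖*‖z‖) := by
    refine (Complex.re_le_norm _).trans (le_of_eq ?_)
    simp only [norm_mul, Complex.norm_I, Complex.norm_real, Real.norm_eq_abs,
      Complex.norm_conj, Complex.norm_two, _root_.abs_of_nonneg hπ.le]
    ring
  have hre3 : (2*(π:ℂ)*Complex.I*conj t * conj z).re ≤ 2*π*(‖t‖*‖z‖) := by
    refine (Complex.re_le_norm _).trans (le_of_eq ?_)
    simp only [norm_mul, Complex.norm_I, Complex.norm_real, Real.norm_eq_abs,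
      Complex.norm_conj, Complex.norm_two, _root_.abs_of_nonneg hπ.le]
    ring
  rw [Complex.add_re, Complex.add_re, hre1]
  nlinarith [hre2, hre3]

lemma key (t : ℂ) (m : ℕ) : ∀ s : ℂ,
    (∫ z : ℂ, z ^ m * Complex.exp (-(2*(π:ℂ)*(z * conj z)) +
        (2*(π:ℂ)*Complex.I*s * z + 2*(π:ℂ)*Complex.I*conj t * conj z)))
      = (1/2 : ℂ) * (Complex.I * conj t) ^ m * Complex.exp (-(2*π*(s * conj t))) := by
  have hπ : (π:ℂ) ≠ 0 := Complex.ofReal_ne_zero.2 Real.pi_ne_zero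
  have hπ0 : (0:ℝ) < π := Real.pi_pos
  induction m with
  | zero =>
    intro s
    have hb := base (2*(π:ℂ)*Complex.I*s) (2*(π:ℂ)*Complex.I*conj t)
    simp only [pow_zero, one_mul]
    have hab : (2*(π:ℂ)*Complex.I*s) * (2*(π:ℂ)*Complex.I*conj t) / (2*(π:ℂ))
        = -(2*(π:ℂ)*(s*conj t)) := by
      rw [div_eq_iff (by simp [hπ] : (2*(π:ℂ)) ≠ 0)]
      linear_combination (4*(π:ℂ)^2*s*conj t) * Complex.I_sq
    rw [hb, hab]
    ring
  | succ m ih =>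
    intro s
    have hcont : ∀ x : ℂ, ∀ k : ℕ, Continuous fun z : ℂ =>
        z ^ k * Complex.exp (-(2*(π:ℂ)*(z * conj z)) +
          (2*(π:ℂ)*Complex.I*x * z + 2*(π:ℂ)*Complex.I*conj t * conj z)) := by
      intro x k
      have hconj : Continuous (fun z : ℂ => conj z) := Complex.continuous_conj
      continuity
    have hball : ∀ x : ℂ, x ∈ Metric.ball s 1 → ‖x‖ ≤ ‖s‖ + 1 := by
      intro x hx
      rw [Metric.mem_ball, dist_eq_norm] at hx
      calc ‖x‖ = ‖(x - s) + s‖ := by ring_nf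
        _ ≤ ‖x - s‖ + ‖s‖ := norm_add_le _ _
        _ ≤ ‖s‖ + 1 := by linarith
    have H := hasDerivAt_integral_of_dominated_loc_of_deriv_le (μ := (volume : Measure ℂ))
      (x₀ := s) (s := Metric.ball s 1)
      (F := fun x z => z ^ m * Complex.exp (-(2*(π:ℂ)*(z * conj z)) +
          (2*(π:ℂ)*Complex.I*x * z + 2*(π:ℂ)*Complex.I*conj t * conj z)))
      (F' := fun x z => (2*(π:ℂ)*Complex.I) * (z ^ (m+1) * Complex.exp (-(2*(π:ℂ)*(z * conj z)) +
          (2*(π:ℂ)*Complex.I*x * z + 2*(π:ℂ)*Complex.I*conj t * conj z))))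
      (bound := fun z => (2*π) * (‖z‖ ^ (m+1) *
          Real.exp (-(2*π)*‖z‖^2 + (2*π*(‖t‖+(‖s‖+1)))*‖z‖)))
      (Metric.ball_mem_nhds s one_pos)
      (Filter.Eventually.of_forall fun x => ((hcont x m).aestronglyMeasurable))
      (by
        refine Integrable.mono' ((integrable_aux m (2*π*(‖t‖+‖s‖))).const_mul 1)
          ((hcont s m).aestronglyMeasurable) (Filter.Eventually.of_forall fun z => ?_)
        rw [one_mul]
        exact norm_aux m t s z)
      (((continuous_const.mul (hcont s (m+1))).aestronglyMeasurable))
      (Filter.Eventually.of_forall fun z => by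
        intro x hx
        rw [norm_mul]
        have h1 : ‖(2*(π:ℂ)*Complex.I)‖ = 2*π := by
          simp only [norm_mul, Complex.norm_I, Complex.norm_real, Real.norm_eq_abs,
            Complex.norm_two, _root_.abs_of_nonneg hπ0.le]
          ring
        rw [h1]
        apply mul_le_mul_of_nonneg_left _ (by positivity)
        refine (norm_aux (m+1) t x z).trans ?_
        apply mul_le_mul_of_nonneg_left _ (by positivity)
        rw [Real.exp_le_exp]
        have hx' := hball x hx
        nlinarith [norm_nonneg z, hπ0, mul_le_mul_of_nonneg_right hx' (norm_nonneg z)])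
      (((integrable_aux (m+1) (2*π*(‖t‖+(‖s‖+1)))).const_mul (2*π)))
      (Filter.Eventually.of_forall fun z => by
        intro x hx
        have hd : HasDerivAt (fun x : ℂ => -(2*(π:ℂ)*(z * conj z)) +
            (2*(π:ℂ)*Complex.I*x * z + 2*(π:ℂ)*Complex.I*conj t * conj z))
            (2*(π:ℂ)*Complex.I * z) x := by
          have h0 : HasDerivAt (fun x : ℂ => 2*(π:ℂ)*Complex.I*x * z)
              (2*(π:ℂ)*Complex.I * z) x := by
            simpa using ((hasDerivAt_id x).const_mul (2*(π:ℂ)*Complex.I)).mul_const z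
          exact ((h0.add_const _).const_add _)
        have hD := hd.cexp.const_mul ((z:ℂ) ^ m)
        have hre : (2*(π:ℂ)*Complex.I) * (z ^ (m+1) * Complex.exp (-(2*(π:ℂ)*(z * conj z)) +
            (2*(π:ℂ)*Complex.I*x * z + 2*(π:ℂ)*Complex.I*conj t * conj z)))
            = z ^ m * (Complex.exp (-(2*(π:ℂ)*(z * conj z)) +
              (2*(π:ℂ)*Complex.I*x * z + 2*(π:ℂ)*Complex.I*conj t * conj z))
              * (2*(π:ℂ)*Complex.I * z)) := by
          rw [pow_succ]; ring
        beta_reduce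
        rw [hre]
        exact hD)
    obtain ⟨-, H2⟩ := H
    have heq : (fun x : ℂ => ∫ z : ℂ, z ^ m * Complex.exp (-(2*(π:ℂ)*(z * conj z)) +
          (2*(π:ℂ)*Complex.I*x * z + 2*(π:ℂ)*Complex.I*conj t * conj z)))
        = fun x : ℂ => (1/2 : ℂ) * (Complex.I * conj t) ^ m *
            Complex.exp (-(2*(π:ℂ)*(x * conj t))) := funext ih
    rw [heq] at H2
    have hg : HasDerivAt (fun x : ℂ => (1/2 : ℂ) * (Complex.I * conj t) ^ m *
          Complex.exp (-(2*(π:ℂ)*(x * conj t))))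
        ((1/2 : ℂ) * (Complex.I * conj t) ^ m *
          (Complex.exp (-(2*(π:ℂ)*(s * conj t))) * (-(2*(π:ℂ)*conj t)))) s := by
      have h0 : HasDerivAt (fun x : ℂ => -(2*(π:ℂ)*(x * conj t))) (-(2*(π:ℂ)*conj t)) s := by
        have h := (((hasDerivAt_id s).mul_const (conj t)).const_mul (2*(π:ℂ))).neg
        simp only [id, one_mul] at h
        exact h
      exact h0.cexp.const_mul _
    have huniq := H2.unique hg
    have hC : (2*(π:ℂ)*Complex.I) ≠ 0 := by
      simp [hπ, Complex.I_ne_zero]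
    beta_reduce at huniq
    rw [MeasureTheory.integral_const_mul] at huniq
    apply mul_left_cancel₀ hC
    rw [huniq]
    rw [pow_succ]
    linear_combination (-(π:ℂ) * (Complex.I * conj t) ^ m *
      Complex.exp (-(2*(π:ℂ)*(s * conj t))) * conj t) * Complex.I_sq

end GFCaux

end

/-- For `t ∈ ℂ` and `m ∈ ℕ₀`:
`∫_ℂ z^m exp(−2π z conj z + 2π i (z t + conj(z t))) d_ℂ z = (i conj t)^m exp(−2π t conj t)`,
where `d_ℂ z` is twice the Lebesgue measure on `ℂ`. -/
theorem gaussian_fourier_complex (t : ℂ) (m : ℕ) :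
    (∫ z : ℂ,
        z ^ m * Complex.exp (-(2 * π * (z * conj z)) +
          2 * π * Complex.I * (z * t + conj (z * t)))
      ∂((2 : ENNReal) • (volume : Measure ℂ))) =
      (Complex.I * conj t) ^ m * Complex.exp (-(2 * π * (t * conj t))) := by
  rw [integral_smul_measure]
  have h1 : (fun z : ℂ => z ^ m * Complex.exp (-(2 * (π:ℂ) * (z * conj z)) +
          2 * π * Complex.I * (z * t + conj (z * t))))
      = fun z : ℂ => z ^ m * Complex.exp (-(2*(π:ℂ)*(z * conj z)) +
        (2*(π:ℂ)*Complex.I*t * z + 2*(π:ℂ)*Complex.I*conj t * conj z)) := by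
    funext z
    congr 2
    rw [map_mul]
    ring
  rw [h1, GFCaux.key t m t]
  have : ((2:ENNReal)).toReal = (2:ℝ) := by simp
  rw [this]
  rw [real_smul]
  push_cast
  ring
end

section
/- Let n ≥ 1, ε ∈ {+1, −1}, γ = (γ_1,…,γ_n) ∈ ℕ_0^n with l = γ_1 + ⋯ + γ_n, and t = (t_1,…,t_n) ∈ ℂ^n. Then ∫_{ℂ^n} (∏_{j=1}^n z_j^{γ_j}) · exp(−2π Σ_{j=1}^n z_j·conj(z_j)) · exp(−2π ε i Σ_{j=1}^n (t_j z_j + conj(t_j z_j))) ∏_{j=1}^n d_ℂ z_j = (−ε i)^l · (∏_{j=1}^n conj(t_j)^{γ_j}) · exp(−2π Σ_{j=1}^n t_j·conj(t_j)). -/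
open Real MeasureTheory ComplexConjugate

open Complex in
open scoped RealInnerProductSpace NNReal in
private noncomputable def Ker (ε : ℝ) (t z : ℂ) : ℂ :=
  Complex.exp (-(2 * π * (z * conj z))) *
    Complex.exp (-(2 * π * (ε:ℂ) * Complex.I * (t * z + conj (t * z))))

section Helpers
open Complex
open scoped RealInnerProductSpace NNReal

lemma mul_conj_eq (z : ℂ) : z * conj z = ((‖z‖ ^ 2 : ℝ) : ℂ) := by
  rw [Complex.mul_conj]
  norm_cast
  rw [Complex.normSq_eq_norm_sq]

lemma norm_Ker (ε : ℝ) (t z : ℂ) : ‖Ker ε t z‖ = rexp (-(2 * π * ‖z‖ ^ 2)) := by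
  unfold Ker
  rw [norm_mul, Complex.norm_exp, Complex.norm_exp,
    ← Real.exp_add]
  congr 1
  have h2 : t * z + conj (t * z) = ((2 * (t * z).re : ℝ) : ℂ) := by
    push_cast
    rw [Complex.add_conj]
    push_cast
    ring
  rw [mul_conj_eq, h2]
  simp [Complex.mul_re, Complex.mul_im, ← Complex.ofReal_pow]

lemma pow_le_factorial_mul_exp {r : ℝ} (hr : 0 ≤ r) (k : ℕ) : r ^ k ≤ k.factorial * rexp r := by
  have h := Real.sum_le_exp_of_nonneg hr (k + 1)
  have h2 : r ^ k / k.factorial ≤ ∑ i ∈ Finset.range (k+1), r ^ i / i.factorial := by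
    refine Finset.single_le_sum (f := fun i => r ^ i / (i.factorial : ℝ)) ?_ (Finset.self_mem_range_succ k)
    intro i _
    positivity
  have h3 : r ^ k / k.factorial ≤ rexp r := h2.trans h
  have hk : (0:ℝ) < k.factorial := by positivity
  calc r ^ k = (r ^ k / k.factorial) * k.factorial := by field_simp
    _ ≤ rexp r * k.factorial := by gcongr
    _ = k.factorial * rexp r := by ring

lemma integrable_gauss_exp : Integrable (fun z : ℂ => rexp (-(π * ‖z‖ ^ 2))) := by
  have h0 : Integrable (fun z : ℂ => Complex.exp (-(π:ℂ) * ‖z‖ ^ 2 + 0 * ⟪(0:ℂ), z⟫)) :=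
    GaussianFourier.integrable_cexp_neg_mul_sq_norm_add (by simpa using pi_pos) 0 0
  have h0n := h0.norm
  have : (fun z : ℂ => ‖Complex.exp (-(π:ℂ) * ‖z‖ ^ 2 + 0 * ⟪(0:ℂ), z⟫)‖)
      = fun z : ℂ => rexp (-(π * ‖z‖ ^ 2)) := by
    funext z
    rw [Complex.norm_exp]
    congr 1
    push_cast
    simp [Complex.mul_re, ← Complex.ofReal_pow]
  rwa [this] at h0n

lemma integrable_gauss_pow (k : ℕ) :
    Integrable (fun z : ℂ => ‖z‖ ^ k * rexp (-(2 * π * ‖z‖ ^ 2))) := by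
  refine (integrable_gauss_exp.const_mul ((k.factorial : ℝ) * rexp 1)).mono' ?_ ?_
  · exact (((continuous_norm.pow k).mul
      ((continuous_const.mul (continuous_norm.pow 2)).neg.rexp)).aestronglyMeasurable)
  · refine Filter.Eventually.of_forall fun z => ?_
    have hr : (0:ℝ) ≤ ‖z‖ := norm_nonneg z
    rw [Real.norm_of_nonneg (by positivity)]
    have h1 : ‖z‖ ^ k ≤ k.factorial * rexp ‖z‖ := pow_le_factorial_mul_exp hr k
    have h2 : ‖z‖ ^ k * rexp (-(2 * π * ‖z‖ ^ 2)) ≤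
        (k.factorial * rexp ‖z‖) * rexp (-(2 * π * ‖z‖ ^ 2)) := by
      gcongr
    refine h2.trans ?_
    rw [mul_assoc (k.factorial : ℝ), mul_assoc (k.factorial : ℝ)]
    have hπ : (3:ℝ) ≤ π := by linarith [Real.pi_gt_three]
    have h4 : rexp ‖z‖ * rexp (-(2 * π * ‖z‖ ^ 2)) ≤ rexp 1 * rexp (-(π * ‖z‖ ^ 2)) := by
      rw [← Real.exp_add, ← Real.exp_add]
      apply Real.exp_le_exp.2
      nlinarith [sq_nonneg (‖z‖ - 1), sq_nonneg ‖z‖]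
    gcongr

lemma continuous_Ker (ε : ℝ) (t : ℂ) : Continuous (fun z => Ker ε t z) := by
  unfold Ker
  have hconj : Continuous (fun z : ℂ => conj z) := continuous_star
  continuity

lemma Ker_shift (ε : ℝ) (t d : ℂ) (u : ℝ) (z : ℂ) :
    Ker ε (t + u • d) z = Ker ε t z *
      Complex.exp ((u:ℂ) * (-(2 * π * (ε:ℂ) * Complex.I * (d * z + conj (d * z))))) := by
  unfold Ker
  have h : (-(2 * π * (ε:ℂ) * Complex.I * ((t + u • d) * z + conj ((t + u • d) * z))))
      = -(2 * π * (ε:ℂ) * Complex.I * (t * z + conj (t * z)))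
        + (u:ℂ) * (-(2 * π * (ε:ℂ) * Complex.I * (d * z + conj (d * z)))) := by
    rw [Complex.real_smul]
    simp only [map_add, map_mul, Complex.conj_ofReal]
    ring
  rw [h, Complex.exp_add]
  ring

lemma oneD_zero (ε : ℝ) (hε : ε = 1 ∨ ε = -1) (t : ℂ) :
    ∫ z : ℂ, Ker ε t z = Complex.exp (-(2 * π * (t * conj t))) / 2 := by
  have hε2 : (ε:ℂ) ^ 2 = 1 := by rcases hε with h | h <;> rw [h] <;> norm_num
  have hπ : (π:ℂ) ≠ 0 := Complex.ofReal_ne_zero.2 pi_ne_zero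
  have key := GaussianFourier.integral_cexp_neg_mul_sq_norm_add
    (V := ℂ) (b := 2 * π) (by simp [pi_pos.le]; positivity) (-(4 * π * (ε:ℂ) * Complex.I)) (conj t)
  have hinner : ∀ z : ℂ, ⟪conj t, z⟫ = (t * z).re := by
    intro z
    rw [real_inner_eq_re_inner ℂ, RCLike.inner_apply]
    simp
    ring
  have hintegrand : ∀ z : ℂ, Ker ε t z
      = Complex.exp (-(2 * π) * ‖z‖ ^ 2 + (-(4 * π * (ε:ℂ) * Complex.I)) * ⟪conj t, z⟫) := by
    intro z
    unfold Ker
    rw [← Complex.exp_add, hinner z]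
    congr 1
    have h2 : t * z + conj (t * z) = ((2 * (t * z).re : ℝ) : ℂ) := by
      push_cast
      rw [Complex.add_conj]
      push_cast
      ring
    rw [mul_conj_eq, h2]
    push_cast
    ring
  simp_rw [hintegrand]
  rw [key, Complex.finrank_real_complex]
  have h3 : ((2:ℕ) / 2 : ℂ) = 1 := by norm_num
  rw [show ((2:ℕ) / 2 : ℂ) = 1 by norm_num, Complex.cpow_one]
  have h4 : (π:ℂ) / (2 * π) = 1 / 2 := by field_simp
  have h5 : ((‖conj t‖:ℂ)) ^ 2 = t * conj t := by
    rw [mul_conj_eq t]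
    push_cast
    rw [RCLike.norm_conj]
  rw [h4, h5]
  have h6 : (-(4 * π * (ε:ℂ) * Complex.I)) ^ 2 * (t * conj t) / (4 * (2 * π))
      = -(2 * π * (t * conj t)) := by
    have hI : Complex.I ^ 2 = -1 := Complex.I_sq
    rw [div_eq_iff (show (4*(2*(π:ℂ))) ≠ 0 by simp [hπ])]
    linear_combination (16 * π^2 * (ε:ℂ)^2 * (t * conj t)) * hI + (-16 * π ^ 2 * (t * conj t)) * hε2
  rw [h6]
  ring

lemma integrable_ker_aux (ε : ℝ) (t : ℂ) (γ k : ℕ) (C : ℝ) (hC : 0 ≤ C) (g : ℂ → ℂ)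
    (hg : Continuous g) (hgb : ∀ z : ℂ, ‖g z‖ ≤ C * ‖z‖ ^ k) :
    Integrable (fun z : ℂ => z ^ γ * Ker ε t z * g z) := by
  refine ((integrable_gauss_pow (γ + k)).const_mul C).mono' ?_ ?_
  · exact (((continuous_pow γ).mul (continuous_Ker ε t)).mul hg).aestronglyMeasurable
  · filter_upwards with z
    rw [norm_mul, norm_mul, norm_Ker, norm_pow]
    calc ‖z‖ ^ γ * rexp (-(2 * π * ‖z‖ ^ 2)) * ‖g z‖
        ≤ ‖z‖ ^ γ * rexp (-(2 * π * ‖z‖ ^ 2)) * (C * ‖z‖ ^ k) := by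
          gcongr
          exact hgb z
      _ = C * (‖z‖ ^ (γ + k) * rexp (-(2 * π * ‖z‖ ^ 2))) := by rw [pow_add]; ring

lemma integrable_pow_ker (ε : ℝ) (t : ℂ) (γ : ℕ) :
    Integrable (fun z : ℂ => z ^ γ * Ker ε t z) := by
  have := integrable_ker_aux ε t γ 0 1 zero_le_one (fun _ => 1) continuous_const (by simp)
  simpa using this

lemma hasDerivAt_int (ε : ℝ) (γ : ℕ) (t d : ℂ) :
    HasDerivAt (fun u : ℝ => ∫ z : ℂ, z ^ γ * Ker ε (t + u • d) z)
      (∫ z : ℂ, z ^ γ * Ker ε t z *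
        (-(2 * π * (ε:ℂ) * Complex.I * (d * z + conj (d * z))))) 0 := by
  have cbound : ∀ z : ℂ, ‖(-(2 * π * (ε:ℂ) * Complex.I * (d * z + conj (d * z))))‖
      ≤ 4 * π * |ε| * ‖d‖ * ‖z‖ := by
    intro z
    rw [norm_neg]
    calc ‖2 * π * (ε:ℂ) * Complex.I * (d * z + conj (d * z))‖
        = ‖(2 * π * (ε:ℂ) * Complex.I : ℂ)‖ * ‖d * z + conj (d * z)‖ := norm_mul _ _
      _ ≤ (2 * π * |ε|) * (‖d‖ * ‖z‖ + ‖d‖ * ‖z‖) := by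
          gcongr
          · simp [norm_mul, abs_of_pos pi_pos]
          · refine (norm_add_le _ _).trans ?_
            gcongr
            · exact (norm_mul _ _).le
            · rw [RCLike.norm_conj]
              exact (norm_mul _ _).le
      _ = 4 * π * |ε| * ‖d‖ * ‖z‖ := by ring
  have main := hasDerivAt_integral_of_dominated_loc_of_deriv_le (μ := (volume : Measure ℂ))
    (x₀ := (0:ℝ))
    (F := fun u (z : ℂ) => z ^ γ * Ker ε (t + u • d) z)
    (F' := fun u (z : ℂ) => z ^ γ * Ker ε (t + u • d) z *
      (-(2 * π * (ε:ℂ) * Complex.I * (d * z + conj (d * z)))))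
    (bound := fun z : ℂ => (4 * π * |ε| * ‖d‖) * (‖z‖ ^ (γ+1) * rexp (-(2 * π * ‖z‖ ^ 2))))
    (Metric.ball_mem_nhds (0:ℝ) one_pos)
    (Filter.Eventually.of_forall fun u =>
      (((continuous_pow γ).mul (continuous_Ker ε (t + u • d))).aestronglyMeasurable))
    (by simpa using integrable_pow_ker ε (t + (0:ℝ) • d) γ)
    ((((continuous_pow γ).mul (continuous_Ker ε (t + (0:ℝ) • d))).mul
      (by continuity)).aestronglyMeasurable)
    (Filter.Eventually.of_forall fun z => ?_)
    ((integrable_gauss_pow (γ+1)).const_mul _)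
    (Filter.Eventually.of_forall fun z => ?_)
  · have h0 : ((0:ℝ) • d) = 0 := zero_smul _ _
    simpa [h0] using main.2
  · -- bound
    intro u hu
    rw [norm_mul, norm_mul, norm_Ker, norm_pow]
    calc ‖z‖ ^ γ * rexp (-(2 * π * ‖z‖ ^ 2)) * ‖(-(2 * π * (ε:ℂ) * Complex.I * (d * z + conj (d * z))))‖
        ≤ ‖z‖ ^ γ * rexp (-(2 * π * ‖z‖ ^ 2)) * (4 * π * |ε| * ‖d‖ * ‖z‖) := by
          gcongr
          exact cbound z
      _ = 4 * π * |ε| * ‖d‖ * (‖z‖ ^ (γ + 1) * rexp (-(2 * π * ‖z‖ ^ 2))) := by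
          rw [pow_succ]; ring
  · -- diff
    intro u hu
    have h1 : HasDerivAt (fun v : ℝ => (v:ℂ)) 1 u := by
      simpa using (hasDerivAt_id u).ofReal_comp
    set c : ℂ := -(2 * π * (ε:ℂ) * Complex.I * (d * z + conj (d * z))) with hc
    have h2 := ((h1.mul_const c).cexp).const_mul (z ^ γ * Ker ε t z)
    have heq : (fun v : ℝ => z ^ γ * Ker ε t z * Complex.exp ((v:ℂ) * c))
        = fun v : ℝ => z ^ γ * Ker ε (t + v • d) z := by
      funext v
      rw [Ker_shift]
      ring
    rw [heq] at h2
    convert h2 using 1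
    show z ^ γ * Ker ε (t + u • d) z * c = z ^ γ * Ker ε t z * (Complex.exp ((u:ℂ) * c) * (1 * c))
    rw [Ker_shift, ← hc]
    ring
    rfl

lemma oneD (ε : ℝ) (hε : ε = 1 ∨ ε = -1) (γ : ℕ) (t : ℂ) :
    ∫ z : ℂ, z ^ γ * Ker ε t z
      = (-(ε:ℂ) * Complex.I) ^ γ * (conj t) ^ γ * Complex.exp (-(2 * π * (t * conj t))) / 2 := by
  induction γ generalizing t with
  | zero => simpa using oneD_zero ε hε t
  | succ γ ih =>
    have hε2 : (ε:ℂ) ^ 2 = 1 := by rcases hε with h | h <;> rw [h] <;> norm_num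
    set K : ℂ := (-(ε:ℂ) * Complex.I) ^ γ with hK
    set T : ℂ := conj t with hT
    set e : ℂ := Complex.exp (-(2 * π * (t * conj t))) with he
    set J1 : ℂ := ∫ z : ℂ, z ^ γ * Ker ε t z * z with hJ1
    set J2 : ℂ := ∫ z : ℂ, z ^ γ * Ker ε t z * conj z with hJ2
    -- derivative of the closed form in direction d
    have hgd : ∀ d : ℂ, HasDerivAt
        (fun u : ℝ => ∫ z : ℂ, z ^ γ * Ker ε (t + u • d) z)
        (K * (((γ:ℂ) * T ^ (γ-1) * conj d) * e
          + T ^ γ * (e * (-(2 * π * (d * T + t * conj d))))) / 2) 0 := by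
      intro d
      have hfun : (fun u : ℝ => ∫ z : ℂ, z ^ γ * Ker ε (t + u • d) z)
          = fun u : ℝ => K * ((T + (u:ℂ) * conj d) ^ γ *
              Complex.exp (-(2 * π * ((t + (u:ℂ) * d) * (T + (u:ℂ) * conj d))))) / 2 := by
        funext u
        rw [ih (t + u • d)]
        rw [hT]
        simp only [Complex.real_smul, map_add, map_mul, Complex.conj_ofReal]
        ring
      rw [hfun]
      have hA : HasDerivAt (fun w : ℂ => T + w * conj d) (conj d) (((0:ℝ):ℂ)) := by
        simpa using ((hasDerivAt_id (((0:ℝ):ℂ))).mul_const (conj d)).const_add T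
      have hB : HasDerivAt (fun w : ℂ => t + w * d) d (((0:ℝ):ℂ)) := by
        simpa using ((hasDerivAt_id (((0:ℝ):ℂ))).mul_const d).const_add t
      have hP := hA.pow γ
      have hR := (((hB.mul hA).const_mul ((2:ℂ) * π)).neg).cexp
      have hC := (((hP.mul hR).const_mul K).div_const 2).comp_ofReal
      convert hC using 1
      · rfl
      simp only [Pi.pow_apply, Pi.neg_apply, Pi.mul_apply, Complex.ofReal_zero, zero_mul, add_zero, mul_zero]
      rfl
    -- the two derivative identities
    have hlin : ∀ d : ℂ, (∫ z : ℂ, z ^ γ * Ker ε t z *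
        (-(2 * π * (ε:ℂ) * Complex.I * (d * z + conj (d * z)))))
        = (-(2 * π * (ε:ℂ) * Complex.I)) * (d * J1 + conj d * J2) := by
      intro d
      have e1 : Integrable (fun z : ℂ => z ^ γ * Ker ε t z * z) :=
        integrable_ker_aux ε t γ 1 1 zero_le_one id continuous_id (by simp)
      have e2 : Integrable (fun z : ℂ => z ^ γ * Ker ε t z * conj z) :=
        integrable_ker_aux ε t γ 1 1 zero_le_one (fun z => conj z) continuous_star
          (by simp [RCLike.norm_conj])
      calc (∫ z : ℂ, z ^ γ * Ker ε t z *
            (-(2 * π * (ε:ℂ) * Complex.I * (d * z + conj (d * z)))))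
          = ∫ z : ℂ, (-(2 * π * (ε:ℂ) * Complex.I)) *
              (d * (z ^ γ * Ker ε t z * z) + conj d * (z ^ γ * Ker ε t z * conj z)) := by
            congr 1
            funext z
            rw [map_mul]
            ring
        _ = (-(2 * π * (ε:ℂ) * Complex.I)) * (d * J1 + conj d * J2) := by
            rw [integral_const_mul, integral_add (e1.const_mul d) (e2.const_mul (conj d)),
              integral_const_mul, integral_const_mul]
    have eq1 : (-(2 * π * (ε:ℂ) * Complex.I)) * ((1:ℂ) * J1 + conj (1:ℂ) * J2)
        = K * (((γ:ℂ) * T ^ (γ-1) * conj (1:ℂ)) * e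
          + T ^ γ * (e * (-(2 * π * ((1:ℂ) * T + t * conj (1:ℂ)))))) / 2 := by
      rw [← hlin 1]
      exact (hasDerivAt_int ε γ t 1).unique (hgd 1)
    have eqI : (-(2 * π * (ε:ℂ) * Complex.I)) * (Complex.I * J1 + conj Complex.I * J2)
        = K * (((γ:ℂ) * T ^ (γ-1) * conj Complex.I) * e
          + T ^ γ * (e * (-(2 * π * (Complex.I * T + t * conj Complex.I))))) / 2 := by
      rw [← hlin Complex.I]
      exact (hasDerivAt_int ε γ t Complex.I).unique (hgd Complex.I)
    -- now solve for J1
    simp only [map_one, Complex.conj_I] at eq1 eqI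
    have hgoal : (∫ z : ℂ, z ^ (γ+1) * Ker ε t z) = J1 := by
      rw [hJ1]
      congr 1
      funext z
      rw [pow_succ]
      ring
    rw [hgoal]
    have hI := Complex.I_sq
    have hπC : (π:ℂ) ≠ 0 := Complex.ofReal_ne_zero.2 pi_ne_zero
    have hεC : (ε:ℂ) ≠ 0 := by rcases hε with h | h <;> simp [h]
    have h4 : (-(4*π*(ε:ℂ)*Complex.I)) ≠ 0 := by
      refine neg_ne_zero.2 (mul_ne_zero (mul_ne_zero (mul_ne_zero ?_ hπC) hεC) Complex.I_ne_zero)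
      norm_num
    have key := congrArg₂ (fun a b : ℂ => a - Complex.I * b) eq1 eqI
    rw [pow_succ, pow_succ, ← hK]
    apply mul_left_cancel₀ h4
    linear_combination key + (2*π*(ε:ℂ)*Complex.I*(J2 - J1)
      + K*e/2*((γ:ℂ)*T^(γ-1) + 2*π*T^γ*(T - t) - 4*π*(ε:ℂ)^2*T^γ*T)) * hI
      + (K*e/2*(4*π*T^γ*T)) * hε2

instance : SigmaFinite ((2:ENNReal) • (volume : Measure ℂ)) := by
  have h : ((2:ENNReal) • (volume : Measure ℂ)) = ((2:ℝ≥0) • (volume : Measure ℂ)) := by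
    ext s hs
    simp
  rw [h]
  infer_instance

end Helpers

/-- Multivariate complex Gaussian integral with monomial:
`∫_{ℂ^n} (∏ z_j^{γ_j}) exp(−2π Σ z_j conj z_j) exp(−2π ε i Σ (t_j z_j + conj(t_j z_j))) ∏ d_ℂ z_j
  = (−ε i)^l (∏ conj(t_j)^{γ_j}) exp(−2π Σ t_j conj t_j)`. -/
theorem gaussian_fourier_complex_multi (n : ℕ) (hn : 1 ≤ n) (ε : ℝ)
    (hε : ε = 1 ∨ ε = -1) (γ : Fin n → ℕ) (t : Fin n → ℂ) :
    (∫ z : Fin n → ℂ,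
        (∏ j, (z j) ^ (γ j)) *
          Complex.exp (-(2 * π * ∑ j, z j * conj (z j))) *
          Complex.exp (-(2 * π * (ε : ℂ) * Complex.I *
            ∑ j, (t j * z j + conj (t j * z j))))
      ∂(MeasureTheory.Measure.pi fun _ : Fin n => (2 : ENNReal) • (volume : Measure ℂ))) =
      (-(ε : ℂ) * Complex.I) ^ (∑ j, γ j) * (∏ j, (conj (t j)) ^ (γ j)) *
        Complex.exp (-(2 * π * ∑ j, t j * conj (t j))) := by
  have hpi : (MeasureTheory.Measure.pi fun _ : Fin n => (2 : ENNReal) • (volume : Measure ℂ))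
      = ((2:ENNReal) ^ n) • MeasureTheory.Measure.pi (fun _ : Fin n => (volume : Measure ℂ)) := by
    refine (Measure.pi_eq (μ' := ((2:ENNReal) ^ n) • MeasureTheory.Measure.pi (fun _ : Fin n => (volume : Measure ℂ))) (μ := fun _ : Fin n => (2 : ENNReal) • (volume : Measure ℂ)) fun s hs => ?_)
    rw [Measure.smul_apply, Measure.pi_pi]
    simp only [Measure.smul_apply, smul_eq_mul]
    rw [Finset.prod_mul_distrib, Finset.prod_const]
    simp [Finset.card_univ]
  have hint : (fun z : Fin n → ℂ =>
      (∏ j, (z j) ^ (γ j)) *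
        Complex.exp (-(2 * π * ∑ j, z j * conj (z j))) *
        Complex.exp (-(2 * π * (ε : ℂ) * Complex.I *
          ∑ j, (t j * z j + conj (t j * z j))))) =
      fun z : Fin n → ℂ => ∏ j, ((z j) ^ (γ j) * Ker ε (t j) (z j)) := by
    funext z
    unfold Ker
    conv_rhs => rw [Finset.prod_mul_distrib, Finset.prod_mul_distrib, ← Complex.exp_sum,
      ← Complex.exp_sum, ← mul_assoc]
    congr 2
    · rw [Finset.mul_sum, ← Finset.sum_neg_distrib]
    · rw [Finset.mul_sum, ← Finset.sum_neg_distrib]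
  rw [hint, hpi, integral_smul_measure,
    MeasureTheory.integral_fintype_prod_eq_prod
      (f := fun j (w : ℂ) => w ^ (γ j) * Ker ε (t j) w)]
  have hone : ∀ j, (∫ w : ℂ, w ^ (γ j) * Ker ε (t j) w)
      = (-(ε:ℂ) * Complex.I) ^ (γ j) * (conj (t j)) ^ (γ j) *
        Complex.exp (-(2 * π * (t j * conj (t j)))) / 2 := fun j => oneD ε hε (γ j) (t j)
  rw [Finset.prod_congr rfl fun j _ => hone j]
  rw [Finset.prod_div_distrib, Finset.prod_mul_distrib, Finset.prod_mul_distrib,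
    Finset.prod_pow_eq_pow_sum, Finset.prod_const, ← Complex.exp_sum]
  have hexp : ∑ j, -(2 * (π:ℂ) * (t j * conj (t j))) = -(2 * π * ∑ j, t j * conj (t j)) := by
    rw [Finset.mul_sum, ← Finset.sum_neg_distrib]
  rw [hexp]
  have h2 : ((2:ENNReal) ^ n).toReal = (2:ℝ)^n := by
    simp
  rw [h2, Finset.card_univ, Fintype.card_fin]
  have h2c : ((2:ℂ)) ^ n ≠ 0 := pow_ne_zero n two_ne_zero
  rw [Complex.real_smul]
  push_cast
  field_simp
end

section
/- Let n ≥ 2, ε ∈ {+1, −1}, let t_1,…,t_{n−1} and a_1,…,a_n be positive real numbers. Then ∫ exp(−π Σ_{i=1}^{n−1} (a_i²/t_i² + Σ_{j=i+1}^{n} (a_j²/t_i²) x_{i,j}²)) · exp(−2π ε i Σ_{i=1}^{n−1} x_{i,i+1}) ∏_{1 ≤ i < j ≤ n} dx_{i,j} = ∏_{i=1}^{n−1} exp(−π (t_i²/a_{i+1}² + a_i²/t_i²)) · t_i^{n−i} · a_{i+1}^{−i}, where the integral is over all real tuples (x_{i,j})_{1 ≤ i < j ≤ n} with Lebesgue measure.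 -/
open Real MeasureTheory Complex

lemma gauss_aux {A : ℝ} (hA : 0 < A) (c : ℂ) :
    ∫ x : ℝ, Complex.exp (-(↑π * ↑A) * x ^ 2 + c * x) =
      ((Real.sqrt A)⁻¹ : ℝ) * Complex.exp (-(c ^ 2 / (4 * -(↑π * ↑A)))) := by
  have hπ : (π : ℂ) ≠ 0 := by exact_mod_cast Real.pi_ne_zero
  have h : (-(↑π * ↑A) : ℂ).re < 0 := by
    simp only [neg_re, re_ofReal_mul, ofReal_re, neg_lt_zero]; positivity
  have key := integral_cexp_quadratic h c 0
  simp only [add_zero, zero_sub] at key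
  rw [key]
  congr 1
  rw [neg_neg, div_mul_eq_div_div, div_self hπ, one_div, ← Complex.ofReal_inv,
    show (1/2 : ℂ) = ((1/2 : ℝ) : ℂ) by norm_num, ← Complex.ofReal_cpow (by positivity),
    Real.inv_rpow hA.le, ← Real.sqrt_eq_rpow]

lemma gauss0 {A : ℝ} (hA : 0 < A) :
    ∫ x : ℝ, Complex.exp (-(↑π * ↑A) * x ^ 2 + 0 * x) = ((Real.sqrt A)⁻¹ : ℝ) := by
  rw [gauss_aux hA 0]
  norm_num

lemma gauss1 {A : ℝ} (hA : 0 < A) {ε : ℝ} (hε : ε ^ 2 = 1) :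
    ∫ x : ℝ, Complex.exp (-(↑π * ↑A) * x ^ 2 + -(2 * ↑π * ↑ε * Complex.I) * x) =
      (((Real.sqrt A)⁻¹ * Real.exp (-(π / A)) : ℝ) : ℂ) := by
  rw [gauss_aux hA _]
  push_cast
  congr 1
  have hπ : (π : ℂ) ≠ 0 := by exact_mod_cast Real.pi_ne_zero
  have hA' : (A : ℂ) ≠ 0 := by exact_mod_cast hA.ne'
  have hε' : ((ε:ℂ))^2 = 1 := by exact_mod_cast hε
  have hc : (-(2 * (π:ℂ) * ε * Complex.I)) ^ 2 = -(4 * (π:ℂ)^2) := by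
    have : (-(2 * (π:ℂ) * ε * Complex.I)) ^ 2 = (2*(π:ℂ))^2 * (ε:ℂ)^2 * Complex.I^2 := by ring
    rw [this, hε', Complex.I_sq]; ring
  rw [hc]
  congr 1
  field_simp

section Aux
variable {m : ℕ}

/-- transfer products over the superdiagonal filter to products over `Fin m`. -/
lemma prod_superdiag {M : Type*} [CommMonoid M]
    (g : {p : Fin (m+1) × Fin (m+1) // p.1 < p.2} → M) :
    ∏ p ∈ Finset.univ.filter
        (fun p : {p : Fin (m+1) × Fin (m+1) // p.1 < p.2} =>
          (p.val.2 : ℕ) = (p.val.1 : ℕ) + 1), g p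
      = ∏ i : Fin m, g ⟨(⟨(i : ℕ), by omega⟩, ⟨(i : ℕ) + 1, by omega⟩),
          Fin.mk_lt_mk.mpr (Nat.lt_succ_self _)⟩ := by
  refine (Finset.prod_bij
    (i := fun (i : Fin m) _ => (⟨(⟨(i : ℕ), by omega⟩, ⟨(i : ℕ) + 1, by omega⟩),
          Fin.mk_lt_mk.mpr (Nat.lt_succ_self _)⟩ :
          {p : Fin (m+1) × Fin (m+1) // p.1 < p.2})) ?_ ?_ ?_ ?_).symm
  · intro i _
    simp
  · intro i _ j _ h
    simp only [Subtype.ext_iff, Prod.ext_iff, Fin.ext_iff] at h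
    exact Fin.ext h.1
  · intro p hp
    simp only [Finset.mem_filter, Finset.mem_univ, true_and] at hp
    have h2 := p.val.2.isLt
    have h1 : (p.val.1 : ℕ) < m := by omega
    refine ⟨⟨(p.val.1 : ℕ), h1⟩, Finset.mem_univ _, ?_⟩
    simp [Subtype.ext_iff, Prod.ext_iff, Fin.ext_iff, hp]
  · intro i _
    rfl


lemma sum_superdiag {M : Type*} [AddCommMonoid M]
    (g : {p : Fin (m+1) × Fin (m+1) // p.1 < p.2} → M) :
    ∑ p ∈ Finset.univ.filter
        (fun p : {p : Fin (m+1) × Fin (m+1) // p.1 < p.2} =>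
          (p.val.2 : ℕ) = (p.val.1 : ℕ) + 1), g p
      = ∑ i : Fin m, g ⟨(⟨(i : ℕ), by omega⟩, ⟨(i : ℕ) + 1, by omega⟩),
          Fin.mk_lt_mk.mpr (Nat.lt_succ_self _)⟩ := by
  refine (Finset.sum_bij
    (i := fun (i : Fin m) _ => (⟨(⟨(i : ℕ), by omega⟩, ⟨(i : ℕ) + 1, by omega⟩),
          Fin.mk_lt_mk.mpr (Nat.lt_succ_self _)⟩ :
          {p : Fin (m+1) × Fin (m+1) // p.1 < p.2})) ?_ ?_ ?_ ?_).symm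
  · intro i _
    simp
  · intro i _ j _ h
    simp only [Subtype.ext_iff, Prod.ext_iff, Fin.ext_iff] at h
    exact Fin.ext h.1
  · intro p hp
    simp only [Finset.mem_filter, Finset.mem_univ, true_and] at hp
    have h2 := p.val.2.isLt
    have h1 : (p.val.1 : ℕ) < m := by omega
    refine ⟨⟨(p.val.1 : ℕ), h1⟩, Finset.mem_univ _, ?_⟩
    simp [Subtype.ext_iff, Prod.ext_iff, Fin.ext_iff, hp]
  · intro i _
    rfl

lemma prod_pairs {n : ℕ} {M : Type*} [CommMonoid M] (g : Fin n × Fin n → M) :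
    ∏ p : {p : Fin n × Fin n // p.1 < p.2}, g p.val
      = ∏ i : Fin n, ∏ j : Fin n, (if i < j then g (i, j) else 1) := by
  rw [← Finset.prod_subtype (Finset.univ.filter fun p : Fin n × Fin n => p.1 < p.2)
    (by simp) g, Finset.prod_filter, Fintype.prod_prod_type]

lemma targeted_count_gt {n : ℕ} (i : Fin n) :
    (Finset.univ.filter fun j : Fin n => i < j).card = n - 1 - (i : ℕ) := by
  have : (Finset.univ.filter fun j : Fin n => i < j) = Finset.Ioi i := by ext; simp
  rw [this, Fin.card_Ioi]

lemma targeted_count_lt {n : ℕ} (j : Fin n) :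
    (Finset.univ.filter fun i : Fin n => i < j).card = (j : ℕ) := by
  have : (Finset.univ.filter fun i : Fin n => i < j) = Finset.Iio j := by ext; simp
  rw [this, Fin.card_Iio]

end Aux

lemma real_identity (m : ℕ) (t a : ℕ → ℝ) (ht : ∀ i, i < m → 0 < t i)
    (ha : ∀ i, i < m + 1 → 0 < a i) :
    Real.exp (-(π * ∑ i ∈ Finset.range m, a i ^ 2 / t i ^ 2)) *
      ∏ p : {p : Fin (m+1) × Fin (m+1) // p.1 < p.2},
        ((t (p.val.1 : ℕ) / a (p.val.2 : ℕ)) *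
          (if (p.val.2 : ℕ) = (p.val.1 : ℕ) + 1 then
            Real.exp (-(π * (t (p.val.1 : ℕ) ^ 2 / a (p.val.2 : ℕ) ^ 2))) else 1))
    = ∏ i : Fin m,
        (Real.exp (-(π * (t (i : ℕ) ^ 2 / a ((i : ℕ) + 1) ^ 2 +
            a (i : ℕ) ^ 2 / t (i : ℕ) ^ 2))) *
          t (i : ℕ) ^ (m - (i : ℕ)) * a ((i : ℕ) + 1) ^ (-(((i : ℕ) : ℤ) + 1))) := by
  have hX : Real.exp (-(π * ∑ i ∈ Finset.range m, a i ^ 2 / t i ^ 2))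
      = ∏ i : Fin m, Real.exp (-(π * (a (i : ℕ) ^ 2 / t (i : ℕ) ^ 2))) := by
    rw [Fin.prod_univ_eq_prod_range (fun k => Real.exp (-(π * (a k ^ 2 / t k ^ 2)))) m,
      ← Real.exp_sum]
    congr 1
    rw [Finset.mul_sum, ← Finset.sum_neg_distrib]
  have hYZ : (∏ p : {p : Fin (m+1) × Fin (m+1) // p.1 < p.2},
      (t (p.val.1 : ℕ) / a (p.val.2 : ℕ)))
      = (∏ i : Fin m, t (i : ℕ) ^ (m - (i : ℕ))) *
        ∏ i : Fin m, a ((i : ℕ) + 1) ^ (-(((i : ℕ) : ℤ) + 1)) := by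
    simp_rw [div_eq_mul_inv]
    rw [Finset.prod_mul_distrib]
    congr 1
    · rw [prod_pairs (g := fun q : Fin (m+1) × Fin (m+1) => t (q.1 : ℕ))]
      have step : ∀ i : Fin (m+1),
          (∏ j : Fin (m+1), if i < j then t (i : ℕ) else 1) = t (i : ℕ) ^ (m - (i : ℕ)) := by
        intro i
        rw [← Finset.prod_filter, Finset.prod_const, targeted_count_gt]
        simp
      simp_rw [step]
      rw [Fin.prod_univ_castSucc]
      simp
    · rw [prod_pairs (g := fun q : Fin (m+1) × Fin (m+1) => (a (q.2 : ℕ))⁻¹),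
        Finset.prod_comm]
      have step : ∀ j : Fin (m+1),
          (∏ i : Fin (m+1), if i < j then (a (j : ℕ))⁻¹ else 1)
            = (a (j : ℕ))⁻¹ ^ (j : ℕ) := by
        intro j
        rw [← Finset.prod_filter, Finset.prod_const, targeted_count_lt]
      simp_rw [step]
      rw [Fin.prod_univ_succ]
      simp only [Fin.val_zero, pow_zero, one_mul, Fin.val_succ]
      refine Finset.prod_congr rfl fun i _ => ?_
      rw [← zpow_natCast, inv_zpow, ← zpow_neg]
      push_cast
      ring_nf
  have hW : (∏ p : {p : Fin (m+1) × Fin (m+1) // p.1 < p.2},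
      (if (p.val.2 : ℕ) = (p.val.1 : ℕ) + 1 then
        Real.exp (-(π * (t (p.val.1 : ℕ) ^ 2 / a (p.val.2 : ℕ) ^ 2))) else 1))
      = ∏ i : Fin m, Real.exp (-(π * (t (i : ℕ) ^ 2 / a ((i : ℕ) + 1) ^ 2))) := by
    rw [← Finset.prod_filter, prod_superdiag]
  rw [Finset.prod_mul_distrib, hX, hYZ, hW, ← Finset.prod_mul_distrib,
    ← Finset.prod_mul_distrib, ← Finset.prod_mul_distrib]
  refine Finset.prod_congr rfl fun i _ => ?_
  rw [show -(π * (t (i : ℕ) ^ 2 / a ((i : ℕ) + 1) ^ 2 + a (i : ℕ) ^ 2 / t (i : ℕ) ^ 2))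
      = -(π * (t (i : ℕ) ^ 2 / a ((i : ℕ) + 1) ^ 2)) + -(π * (a (i : ℕ) ^ 2 / t (i : ℕ) ^ 2))
      by ring, Real.exp_add]
  ring

/-- Real Gaussian integral with character over upper triangular unipotent coordinates:
`∫ exp(−π Σ_{i=1}^{n−1} (a_i²/t_i² + Σ_{j>i} (a_j²/t_i²) x_{i,j}²)) exp(−2π ε i Σ x_{i,i+1}) ∏ dx
  = ∏_{i=1}^{n−1} exp(−π (t_i²/a_{i+1}² + a_i²/t_i²)) t_i^{n−i} a_{i+1}^{−i}`
(indices written here `0`-based: the paper's `i` is `i+1`). -/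
theorem gaussian_unipotent_character_integral_real (n : ℕ) (hn : 2 ≤ n) (ε : ℝ)
    (hε : ε = 1 ∨ ε = -1) (t a : ℕ → ℝ)
    (ht : ∀ i, i < n - 1 → 0 < t i) (ha : ∀ i, i < n → 0 < a i) :
    (∫ x : {p : Fin n × Fin n // p.1 < p.2} → ℝ,
        (Real.exp (-(π * ((∑ i ∈ Finset.range (n - 1), a i ^ 2 / t i ^ 2) +
            ∑ p : {p : Fin n × Fin n // p.1 < p.2},
              a p.val.2 ^ 2 / t p.val.1 ^ 2 * x p ^ 2))) : ℂ) *
          Complex.exp (-(2 * π * (ε : ℂ) * Complex.I *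
            ∑ i : Fin (n - 1),
              ((x ⟨(⟨i.val, by have h := i.isLt; omega⟩,
                    ⟨i.val + 1, by have h := i.isLt; omega⟩),
                  Fin.mk_lt_mk.mpr (Nat.lt_succ_self _)⟩ : ℝ) : ℂ)))) =
      ∏ i : Fin (n - 1),
        ((Real.exp (-(π * (t i.val ^ 2 / a (i.val + 1) ^ 2 + a i.val ^ 2 / t i.val ^ 2))) *
            t i.val ^ (n - 1 - i.val) *
            a (i.val + 1) ^ (-((i.val : ℤ) + 1)) : ℝ) : ℂ) := by
  obtain ⟨m, rfl⟩ : ∃ m, n = m + 1 := ⟨n - 1, by omega⟩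
  replace ht : ∀ i, i < m → 0 < t i := ht
  show (∫ x : {p : Fin (m+1) × Fin (m+1) // p.1 < p.2} → ℝ,
        (Real.exp (-(π * ((∑ i ∈ Finset.range m, a i ^ 2 / t i ^ 2) +
            ∑ p : {p : Fin (m+1) × Fin (m+1) // p.1 < p.2},
              a p.val.2 ^ 2 / t p.val.1 ^ 2 * x p ^ 2))) : ℂ) *
          Complex.exp (-(2 * π * (ε : ℂ) * Complex.I *
            ∑ i : Fin m,
              ((x ⟨(⟨i.val, by omega⟩,
                    ⟨i.val + 1, by omega⟩),
                  Fin.mk_lt_mk.mpr (Nat.lt_succ_self _)⟩ : ℝ) : ℂ)))) =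
      ∏ i : Fin m,
        ((Real.exp (-(π * (t i.val ^ 2 / a (i.val + 1) ^ 2 + a i.val ^ 2 / t i.val ^ 2))) *
            t i.val ^ (m - i.val) *
            a (i.val + 1) ^ (-((i.val : ℤ) + 1)) : ℝ) : ℂ)
  set S := {p : Fin (m+1) × Fin (m+1) // p.1 < p.2} with hS
  have hε2 : ε ^ 2 = 1 := by rcases hε with h | h <;> simp [h]
  have hp1 : ∀ p : S, (p.val.1 : ℕ) < m := by
    intro p
    have h := p.prop
    have h2 := p.val.2.isLt
    rw [Fin.lt_iff_val_lt_val] at h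
    omega
  have hAp : ∀ p : S, 0 < a (p.val.2 : ℕ) ^ 2 / t (p.val.1 : ℕ) ^ 2 := by
    intro p
    have := ht _ (hp1 p)
    have := ha _ p.val.2.isLt
    positivity
  set cc : S → ℂ := fun p =>
    if (p.val.2 : ℕ) = (p.val.1 : ℕ) + 1 then -(2 * ↑π * ↑ε * Complex.I) else 0 with hcc
  set f : S → ℝ → ℂ := fun p y =>
    Complex.exp (-(↑π * ↑(a (p.val.2 : ℕ) ^ 2 / t (p.val.1 : ℕ) ^ 2)) * y ^ 2 + cc p * y)
    with hf
  set v : S → ℝ := fun p => (t (p.val.1 : ℕ) / a (p.val.2 : ℕ)) *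
    (if (p.val.2 : ℕ) = (p.val.1 : ℕ) + 1 then
      Real.exp (-(π * (t (p.val.1 : ℕ) ^ 2 / a (p.val.2 : ℕ) ^ 2))) else 1) with hv
  have hpt : ∀ x : S → ℝ,
      (Real.exp (-(π * ((∑ i ∈ Finset.range m, a i ^ 2 / t i ^ 2) +
            ∑ p : S, a (p.val.2 : ℕ) ^ 2 / t (p.val.1 : ℕ) ^ 2 * x p ^ 2))) : ℂ) *
          Complex.exp (-(2 * π * (ε : ℂ) * Complex.I *
            ∑ i : Fin m,
              ((x ⟨(⟨i.val, by omega⟩, ⟨i.val + 1, by omega⟩),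
                  Fin.mk_lt_mk.mpr (Nat.lt_succ_self _)⟩ : ℝ) : ℂ)))
        = (Real.exp (-(π * ∑ i ∈ Finset.range m, a i ^ 2 / t i ^ 2)) : ℂ) *
          ∏ p : S, f p (x p) := by
    intro x
    rw [hf]
    simp only []
    rw [← Complex.exp_sum]
    have hsum : ∑ p : S,
        (-(↑π * ↑(a (p.val.2 : ℕ) ^ 2 / t (p.val.1 : ℕ) ^ 2)) * (x p : ℂ) ^ 2 + cc p * x p)
        = (-(↑π * ↑(∑ p : S, (a (p.val.2 : ℕ) ^ 2 / t (p.val.1 : ℕ) ^ 2 * x p ^ 2 : ℝ))) : ℂ)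
          + -(2 * ↑π * ↑ε * Complex.I *
            ∑ i : Fin m, ((x ⟨(⟨i.val, by omega⟩, ⟨i.val + 1, by omega⟩),
                Fin.mk_lt_mk.mpr (Nat.lt_succ_self _)⟩ : ℝ) : ℂ)) := by
      rw [Finset.sum_add_distrib]
      congr 1
      · push_cast
        rw [Finset.mul_sum, ← Finset.sum_neg_distrib]
        exact Finset.sum_congr rfl fun p _ => by ring
      · rw [hcc]
        simp only [ite_mul, zero_mul]
        rw [← Finset.sum_filter, sum_superdiag
          (g := fun p : S => -(2 * (π:ℂ) * ε * Complex.I) * (x p : ℂ)),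
          ← Finset.mul_sum, neg_mul]
    rw [hsum, Complex.ofReal_exp, Complex.ofReal_exp, ← Complex.exp_add, ← Complex.exp_add]
    congr 1
    push_cast
    ring
  rw [integral_congr_ae (Filter.Eventually.of_forall hpt)]
  rw [MeasureTheory.integral_const_mul, volume_pi, MeasureTheory.integral_fintype_prod_eq_prod (ι := S) f]
  have hval : ∀ p : S, (∫ y : ℝ, f p y) = ((v p : ℝ) : ℂ) := by
    intro p
    have htp := ht _ (hp1 p)
    have hap := ha _ p.val.2.isLt
    have hsq : a (p.val.2 : ℕ) ^ 2 / t (p.val.1 : ℕ) ^ 2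
        = (a (p.val.2 : ℕ) / t (p.val.1 : ℕ)) ^ 2 := (div_pow _ _ _).symm
    by_cases hc : (p.val.2 : ℕ) = (p.val.1 : ℕ) + 1
    · rw [hf]
      simp only [hcc, if_pos hc]
      rw [gauss1 (hAp p) hε2, hv]
      simp only [if_pos hc]
      rw [hsq, Real.sqrt_sq (by positivity), inv_div]
      norm_cast
      congr 2
      rw [div_pow]
      field_simp
    · rw [hf]
      simp only [hcc, if_neg hc]
      rw [gauss0 (hAp p), hv]
      simp only [if_neg hc, mul_one]
      rw [hsq, Real.sqrt_sq (by positivity), inv_div]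
  rw [Finset.prod_congr rfl fun p _ => hval p, ← Complex.ofReal_prod, ← Complex.ofReal_mul,
    show (∏ i : Fin m,
        ((Real.exp (-(π * (t i.val ^ 2 / a (i.val + 1) ^ 2 + a i.val ^ 2 / t i.val ^ 2))) *
            t i.val ^ (m - i.val) *
            a (i.val + 1) ^ (-((i.val : ℤ) + 1)) : ℝ) : ℂ))
      = ((∏ i : Fin m,
          (Real.exp (-(π * (t i.val ^ 2 / a (i.val + 1) ^ 2 + a i.val ^ 2 / t i.val ^ 2))) *
            t i.val ^ (m - i.val) *
            a (i.val + 1) ^ (-((i.val : ℤ) + 1)) : ℝ) : ℝ) : ℂ)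
      from (Complex.ofReal_prod _ _).symm]
  exact_mod_cast congrArg Complex.ofReal (real_identity m t a ht ha)
end

section
/- For every n ≥ 1 and every γ = (γ_1,…,γ_n) ∈ ℕ_0^n with l = γ_1 + ⋯ + γ_n, one has r(Q(γ)) = (γ_1! γ_2! ⋯ γ_n!) / l!; equivalently, r(Q(γ))^{−1} equals the multinomial coefficient b(γ) = l!/(γ_1! ⋯ γ_n!). -/
/-- The product `r(M)` of ratios of factorials attached to an integral triangular array
`M = (m_{i,j})_{1 ≤ i ≤ j ≤ n}` (entries accessed as `M i j`):
`r(M) = ∏_{1 ≤ i ≤ j < k ≤ n} (m_{i,k} − m_{j,k−1} − i + j)! (m_{i,k−1} − m_{j+1,k} − i + j)! /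
        ((m_{i,k−1} − m_{j,k−1} − i + j)! (m_{i,k} − m_{j+1,k} − i + j)!)`. -/
def rGT (n : ℕ) (M : ℕ → ℕ → ℤ) : ℚ :=
  ∏ i ∈ Finset.Icc 1 n, ∏ j ∈ Finset.Icc i n, ∏ k ∈ Finset.Icc (j + 1) n,
    ((((M i k - M j (k - 1) - (i : ℤ) + (j : ℤ)).toNat.factorial : ℚ) *
      ((M i (k - 1) - M (j + 1) k - (i : ℤ) + (j : ℤ)).toNat.factorial : ℚ)) /
     (((M i (k - 1) - M j (k - 1) - (i : ℤ) + (j : ℤ)).toNat.factorial : ℚ) *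
      ((M i k - M (j + 1) k - (i : ℤ) + (j : ℤ)).toNat.factorial : ℚ)))

/-- Membership `M ∈ G(λ)` for an integral triangular array of size `n`:
top row equals `λ` and the interlacing conditions hold. -/
def isGT (n : ℕ) (lam : ℕ → ℤ) (M : ℕ → ℕ → ℤ) : Prop :=
  (∀ i, 1 ≤ i → i ≤ n → M i n = lam i) ∧
  ∀ j k, 1 ≤ j → j < k → k ≤ n → M j (k - 1) ≤ M j k ∧ M (j + 1) k ≤ M j (k - 1)

/-- The weight `γ^M_j = Σ_{i=1}^{j} m_{i,j} − Σ_{i=1}^{j−1} m_{i,j−1}`. -/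
def wtGT (M : ℕ → ℕ → ℤ) (j : ℕ) : ℤ :=
  (∑ i ∈ Finset.Icc 1 j, M i j) - ∑ i ∈ Finset.Icc 1 (j - 1), M i (j - 1)

/-- The array `Q(γ)`: first row `(1,j)`-entry `γ_1 + ⋯ + γ_j`, other entries `0`. -/
def QGT (γ : ℕ → ℕ) : ℕ → ℕ → ℤ :=
  fun i j => if i = 1 then ∑ k ∈ Finset.Icc 1 j, (γ k : ℤ) else 0

/-- The array `H(λ)` whose `(i,j)`-entry is `λ_i`. -/
def HGT (lam : ℕ → ℤ) : ℕ → ℕ → ℤ := fun i _ => lam i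


private lemma tele_aux (f g : ℕ → ℚ) (hg : ∀ k, g k ≠ 0) :
    ∀ n, 1 ≤ n → ∏ k ∈ Finset.Icc 2 n, (f k * g (k - 1) / g k)
      = (∏ k ∈ Finset.Icc 2 n, f k) * g 1 / g n := by
  intro n hn
  induction n, hn using Nat.le_induction with
  | base => simp [div_self (hg 1)]
  | succ n hn ih =>
    rw [Finset.prod_Icc_succ_top (by omega), Finset.prod_Icc_succ_top (by omega), ih]
    have h1 := hg n
    have h2 := hg (n + 1)
    simp only [Nat.add_sub_cancel]
    field_simp

/-- `r(Q(γ)) = γ_1! ⋯ γ_n! / l!` where `l = γ_1 + ⋯ + γ_n`. -/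
theorem rGT_QGT (n : ℕ) (hn : 1 ≤ n) (γ : ℕ → ℕ) (l : ℕ)
    (hl : l = ∑ k ∈ Finset.Icc 1 n, γ k) :
    rGT n (QGT γ) = (∏ k ∈ Finset.Icc 1 n, ((γ k).factorial : ℚ)) / (l.factorial : ℚ) ∧
    (rGT n (QGT γ))⁻¹ = (l.factorial : ℚ) / ∏ k ∈ Finset.Icc 1 n, ((γ k).factorial : ℚ) := by
  have hQ1 : ∀ j : ℕ, QGT γ 1 j = ((∑ t ∈ Finset.Icc 1 j, γ t : ℕ) : ℤ) := by
    intro j; simp [QGT]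
  have hQ0 : ∀ i j : ℕ, i ≠ 1 → QGT γ i j = 0 := fun i j h => if_neg h
  have hNk : ∀ k, 2 ≤ k →
      ∑ t ∈ Finset.Icc 1 k, γ t = (∑ t ∈ Finset.Icc 1 (k - 1), γ t) + γ k := by
    intro k hk
    have h : Finset.Icc 1 k = insert k (Finset.Icc 1 (k - 1)) := by
      ext x; simp only [Finset.mem_Icc, Finset.mem_insert]; omega
    rw [h, Finset.sum_insert (by simp only [Finset.mem_Icc]; omega)]
    ring
  have key : rGT n (QGT γ) = ∏ k ∈ Finset.Icc 2 n,
      (((γ k).factorial : ℚ) * ((∑ t ∈ Finset.Icc 1 (k - 1), γ t).factorial : ℚ) /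
        ((∑ t ∈ Finset.Icc 1 k, γ t).factorial : ℚ)) := by
    unfold rGT
    rw [Finset.prod_eq_single 1]
    · rw [Finset.prod_eq_single 1]
      · have h2 : (1 : ℕ) + 1 = 2 := rfl
        rw [h2]
        apply Finset.prod_congr rfl
        intro k hk
        have hk2 : 2 ≤ k := (Finset.mem_Icc.mp hk).1
        rw [hQ1 k, hQ1 (k - 1), hQ0 2 k (by norm_num)]
        have hs := hNk k hk2
        have e1 : (((∑ t ∈ Finset.Icc 1 k, γ t : ℕ) : ℤ) -
            ((∑ t ∈ Finset.Icc 1 (k - 1), γ t : ℕ) : ℤ) - ((1 : ℕ) : ℤ) + ((1 : ℕ) : ℤ)).toNat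
            = γ k := by omega
        have e2 : (((∑ t ∈ Finset.Icc 1 (k - 1), γ t : ℕ) : ℤ) - 0 - ((1 : ℕ) : ℤ) +
            ((1 : ℕ) : ℤ)).toNat = ∑ t ∈ Finset.Icc 1 (k - 1), γ t := by omega
        have e3 : (((∑ t ∈ Finset.Icc 1 (k - 1), γ t : ℕ) : ℤ) -
            ((∑ t ∈ Finset.Icc 1 (k - 1), γ t : ℕ) : ℤ) - ((1 : ℕ) : ℤ) + ((1 : ℕ) : ℤ)).toNat
            = 0 := by omega
        have e4 : (((∑ t ∈ Finset.Icc 1 k, γ t : ℕ) : ℤ) - 0 - ((1 : ℕ) : ℤ) +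
            ((1 : ℕ) : ℤ)).toNat = ∑ t ∈ Finset.Icc 1 k, γ t := by omega
        rw [e1, e2, e3, e4, Nat.factorial_zero]
        push_cast
        ring
      · intro j hj hj1
        apply Finset.prod_eq_one
        intro k hk
        have hj2 : j + 1 ≠ 1 := by have := (Finset.mem_Icc.mp hj).1; omega
        rw [hQ1 k, hQ1 (k - 1), hQ0 j (k - 1) hj1, hQ0 (j + 1) k hj2]
        rw [mul_comm]
        exact div_self (by positivity)
      · intro h
        exact absurd (Finset.mem_Icc.mpr ⟨le_refl 1, hn⟩) h
    · intro i hi hi1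
      apply Finset.prod_eq_one
      intro j hj
      apply Finset.prod_eq_one
      intro k hk
      have hj1 : j ≠ 1 := by
        have := (Finset.mem_Icc.mp hi).1; have := (Finset.mem_Icc.mp hj).1; omega
      have hj2 : j + 1 ≠ 1 := by
        have := (Finset.mem_Icc.mp hi).1; have := (Finset.mem_Icc.mp hj).1; omega
      rw [hQ0 i k hi1, hQ0 i (k - 1) hi1, hQ0 j (k - 1) hj1, hQ0 (j + 1) k hj2]
      exact div_self (by positivity)
    · intro h
      exact absurd (Finset.mem_Icc.mpr ⟨le_refl 1, hn⟩) h
  have hgne : ∀ k : ℕ, ((∑ t ∈ Finset.Icc 1 k, γ t).factorial : ℚ) ≠ 0 := by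
    intro k; exact_mod_cast Nat.factorial_ne_zero _
  rw [key, tele_aux (fun k => ((γ k).factorial : ℚ))
    (fun k => ((∑ t ∈ Finset.Icc 1 k, γ t).factorial : ℚ)) hgne n hn]
  have hsplit : Finset.Icc 1 n = insert 1 (Finset.Icc 2 n) := by
    ext x; simp only [Finset.mem_Icc, Finset.mem_insert]; omega
  have hN1 : ∑ t ∈ Finset.Icc 1 1, γ t = γ 1 := by simp
  have hmain : (∏ k ∈ Finset.Icc 2 n, ((γ k).factorial : ℚ)) *
      ((∑ t ∈ Finset.Icc 1 1, γ t).factorial : ℚ) /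
      ((∑ t ∈ Finset.Icc 1 n, γ t).factorial : ℚ)
      = (∏ k ∈ Finset.Icc 1 n, ((γ k).factorial : ℚ)) / (l.factorial : ℚ) := by
    rw [hl, hN1,
      show (∏ k ∈ Finset.Icc 1 n, ((γ k).factorial : ℚ))
          = ((γ 1).factorial : ℚ) * ∏ k ∈ Finset.Icc 2 n, ((γ k).factorial : ℚ) from by
        rw [hsplit, Finset.prod_insert (by simp)]]
    ring
  exact ⟨hmain, by rw [hmain, inv_div]⟩
end

section
/- Let n ≥ 2, let λ = (λ_1,…,λ_n) ∈ ℤ^n with λ_1 ≥ ⋯ ≥ λ_n, and let μ = (μ_1,…,μ_{n−1}) ∈ Ξ⁺(λ). Let H(μ)[λ] denote the integral triangular array of size n whose (i,n)-entry is λ_i for 1 ≤ i ≤ n and whose (i,j)-entry is μ_i for all 1 ≤ i ≤ j ≤ n−1. Then H(μ)[λ] ∈ G(λ) and r(H(μ)[λ]) = ∏_{1 ≤ i ≤ j ≤ n−1} (λ_i − μ_j − i + j)! (μ_i − λ_{j+1} − i + j)! / ((μ_i − μ_j − i + j)! (λ_i − λ_{j+1} − i + j)!). -/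
/-- For `μ ∈ Ξ⁺(λ)`, the array `H(μ)[λ]` (top row `λ`, all other rows `μ`) lies in `G(λ)`
and `r(H(μ)[λ]) = ∏_{1 ≤ i ≤ j ≤ n−1} (λ_i − μ_j − i + j)! (μ_i − λ_{j+1} − i + j)! /
((μ_i − μ_j − i + j)! (λ_i − λ_{j+1} − i + j)!)`. -/
theorem rGT_HGT_mu_lambda (n : ℕ) (hn : 2 ≤ n) (lam mu : ℕ → ℤ)
    (hlam : ∀ i, 1 ≤ i → i < n → lam (i + 1) ≤ lam i)
    (hmu_mono : ∀ i, 1 ≤ i → i < n - 1 → mu (i + 1) ≤ mu i)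
    (hmu : ∀ i, 1 ≤ i → i ≤ n - 1 → mu i ≤ lam i ∧ lam (i + 1) ≤ mu i) :
    isGT n lam (fun i j => if j = n then lam i else mu i) ∧
    rGT n (fun i j => if j = n then lam i else mu i) =
      ∏ i ∈ Finset.Icc 1 (n - 1), ∏ j ∈ Finset.Icc i (n - 1),
        ((((lam i - mu j - (i : ℤ) + (j : ℤ)).toNat.factorial : ℚ) *
          ((mu i - lam (j + 1) - (i : ℤ) + (j : ℤ)).toNat.factorial : ℚ)) /
         (((mu i - mu j - (i : ℤ) + (j : ℤ)).toNat.factorial : ℚ) *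
          ((lam i - lam (j + 1) - (i : ℤ) + (j : ℤ)).toNat.factorial : ℚ))) := by
  have hn1 : n - 1 + 1 = n := by omega
  constructor
  · constructor
    · intro i hi hin; simp
    · intro j k hj hjk hkn
      by_cases hk : k = n
      · have h2 : k - 1 ≠ n := by omega
        obtain ⟨ha, hb⟩ := hmu j hj (by omega)
        simp only [if_pos hk, if_neg h2]
        exact ⟨ha, hb⟩
      · have h2 : k - 1 ≠ n := by omega
        simp only [hk, h2, if_false]
        exact ⟨le_refl _, hmu_mono j hj (by omega)⟩
  · unfold rGT
    set T : ℕ → ℕ → ℚ := fun i j =>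
      ((((lam i - mu j - (i : ℤ) + (j : ℤ)).toNat.factorial : ℚ) *
          ((mu i - lam (j + 1) - (i : ℤ) + (j : ℤ)).toNat.factorial : ℚ)) /
         (((mu i - mu j - (i : ℤ) + (j : ℤ)).toNat.factorial : ℚ) *
          ((lam i - lam (j + 1) - (i : ℤ) + (j : ℤ)).toNat.factorial : ℚ))) with hT
    have key : ∀ i j : ℕ, 1 ≤ i → i ≤ j →
        (∏ k ∈ Finset.Icc (j + 1) n,
          ((((if k = n then lam i else mu i) - (if k - 1 = n then lam j else mu j) - (i : ℤ) + (j : ℤ)).toNat.factorial : ℚ) *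
            (((if k - 1 = n then lam i else mu i) - (if k = n then lam (j+1) else mu (j+1)) - (i : ℤ) + (j : ℤ)).toNat.factorial : ℚ) /
           ((((if k - 1 = n then lam i else mu i) - (if k - 1 = n then lam j else mu j) - (i : ℤ) + (j : ℤ)).toNat.factorial : ℚ) *
            (((if k = n then lam i else mu i) - (if k = n then lam (j+1) else mu (j+1)) - (i : ℤ) + (j : ℤ)).toNat.factorial : ℚ)))) =
        if j + 1 ≤ n then T i j else 1 := by
      intro i j hi hij
      by_cases hjn : j + 1 ≤ n
      · rw [if_pos hjn]
        rw [Finset.prod_eq_single_of_mem n (Finset.mem_Icc.mpr ⟨hjn, le_refl n⟩)]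
        · have h2 : n - 1 ≠ n := by omega
          simp only [if_pos rfl, if_neg h2, if_true, hT]
        · intro k hk hkne
          have hk1 : k - 1 ≠ n := by
            have := (Finset.mem_Icc.mp hk).2
            omega
          simp only [hkne, hk1, if_false]
          rw [div_self]
          positivity
      · rw [if_neg hjn]
        rw [Finset.Icc_eq_empty (by omega), Finset.prod_empty]
    simp only
    rw [Finset.prod_congr rfl (fun i hi => Finset.prod_congr rfl
      (fun j hj => key i j (Finset.mem_Icc.mp hi).1 (Finset.mem_Icc.mp hj).1))]
    rw [← hn1]
    rw [Finset.prod_Icc_succ_top (by omega)]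
    have hlast : ∏ j ∈ Finset.Icc (n - 1 + 1) (n - 1 + 1),
        (if j + 1 ≤ n - 1 + 1 then T (n - 1 + 1) j else 1) = 1 := by
      rw [Finset.Icc_self, Finset.prod_singleton, if_neg (by omega)]
    rw [hlast, mul_one]
    refine Finset.prod_congr rfl fun i hi => ?_
    have hi' := Finset.mem_Icc.mp hi
    rw [Finset.prod_Icc_succ_top (by omega), if_neg (by omega), mul_one]
    exact Finset.prod_congr rfl fun j hj => if_pos (by
      have := (Finset.mem_Icc.mp hj).2; omega)
end

section
/- Let n ≥ 2, let λ = (λ_1,…,λ_n) ∈ ℤ^n with λ_1 ≥ ⋯ ≥ λ_n, fix indices 1 ≤ i ≤ j ≤ n−1, and let M = (m_{p,q}) ∈ G(λ) be such that M + Δ_{i,j} ∈ G(λ), where Δ_{i,j} is the integral triangular array of size n with 1 at the (i,j)-th entry and 0 elsewhere. Define the rational numbers a_{i,j}(M) = [∏_{h=1}^{i} (m_{h,j+1} − m_{i,j} − h + i) / ∏_{h=1}^{i−1} (m_{h,j} − m_{i,j} − h + i)] · ∏_{h=2}^{i} (m_{h−1,j−1} − m_{i,j} − h + i)/(m_{h−1,j}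 − m_{i,j} − h + i) and A_{i,j}(M) = [∏_{h=1}^{j+1} (m_{h,j+1} − m_{i,j} − h + i)] · [∏_{h=1}^{j−1} (m_{h,j−1} − m_{i,j} − h + i − 1)] / ∏_{1 ≤ h ≤ j, h ≠ i} (m_{h,j} − m_{i,j} − h + i)(m_{h,j} − m_{i,j} − h + i − 1). Then all the denominators occurring are nonzero and a_{i,j}(M)² · r(M + Δ_{i,j}) = |A_{i,j}(M)| · r(M). -/
/-- The rational number `a_{i,j}(M)`. -/
def aGT (M : ℕ → ℕ → ℤ) (i j : ℕ) : ℚ :=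
  ((∏ h ∈ Finset.Icc 1 i, ((M h (j + 1) - M i j - (h : ℤ) + (i : ℤ) : ℤ) : ℚ)) /
   (∏ h ∈ Finset.Icc 1 (i - 1), ((M h j - M i j - (h : ℤ) + (i : ℤ) : ℤ) : ℚ))) *
  ∏ h ∈ Finset.Icc 2 i,
    (((M (h - 1) (j - 1) - M i j - (h : ℤ) + (i : ℤ) : ℤ) : ℚ) /
     ((M (h - 1) j - M i j - (h : ℤ) + (i : ℤ) : ℤ) : ℚ))

/-- The rational number `A_{i,j}(M)`. -/
def AGT (M : ℕ → ℕ → ℤ) (i j : ℕ) : ℚ :=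
  ((∏ h ∈ Finset.Icc 1 (j + 1), ((M h (j + 1) - M i j - (h : ℤ) + (i : ℤ) : ℤ) : ℚ)) *
   (∏ h ∈ Finset.Icc 1 (j - 1), ((M h (j - 1) - M i j - (h : ℤ) + (i : ℤ) - 1 : ℤ) : ℚ))) /
  ∏ h ∈ (Finset.Icc 1 j).erase i,
    (((M h j - M i j - (h : ℤ) + (i : ℤ) : ℤ) : ℚ) *
     ((M h j - M i j - (h : ℤ) + (i : ℤ) - 1 : ℤ) : ℚ))


open Finset

/- factorial successor -/
lemma factCastSucc (x : ℤ) (hx : 0 ≤ x) :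
    (((x+1).toNat.factorial : ℚ)) = (x+1) * (x.toNat.factorial : ℚ) := by
  have h : (x+1).toNat = x.toNat + 1 := by omega
  have h2 : ((x.toNat : ℚ)) = (x : ℚ) := by
    exact_mod_cast congrArg (Int.cast : ℤ → ℚ) (Int.toNat_of_nonneg hx)
  rw [h, Nat.factorial_succ]
  push_cast
  rw [h2]

lemma factCastPred (x : ℤ) (hx : 1 ≤ x) :
    ((x.toNat.factorial : ℚ)) = x * ((x-1).toNat.factorial : ℚ) := by
  have := factCastSucc (x-1) (by omega)
  simpa using this

/- product splitting over Icc -/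
lemma prodIccSplit (f : ℕ → ℚ) {a b c : ℕ} (h1 : a ≤ b + 1) (h2 : b ≤ c) :
    ∏ x ∈ Icc a c, f x = (∏ x ∈ Icc a b, f x) * ∏ x ∈ Icc (b+1) c, f x := by
  rw [← Finset.prod_union]
  · apply Finset.prod_congr _ (fun _ _ => rfl)
    ext x; simp only [Finset.mem_union, Finset.mem_Icc]; omega
  · rw [Finset.disjoint_left]; intro x hx hx'
    simp only [Finset.mem_Icc] at hx hx'; omega

lemma prodIccShift (f : ℕ → ℚ) (a b : ℕ) :
    ∏ x ∈ Icc (a+1) (b+1), f x = ∏ x ∈ Icc a b, f (x+1) := by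
  have : Icc (a+1) (b+1) = (Icc a b).map ⟨fun x => x + 1, add_left_injective 1⟩ := by
    ext x; simp only [Finset.mem_map, Finset.mem_Icc, Function.Embedding.coeFn_mk]
    constructor
    · intro h; exact ⟨x - 1, by omega, by omega⟩
    · rintro ⟨y, hy, rfl⟩; omega
  rw [this, Finset.prod_map]
  rfl

lemma prodEraseSplit (f : ℕ → ℚ) {i j : ℕ} (h1 : 1 ≤ i) (h2 : i ≤ j) :
    ∏ x ∈ (Icc 1 j).erase i, f x = (∏ x ∈ Icc 1 (i-1), f x) * ∏ x ∈ Icc (i+1) j, f x := by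
  rw [← Finset.prod_union]
  · apply Finset.prod_congr _ (fun _ _ => rfl)
    ext x; simp only [Finset.mem_union, Finset.mem_Icc, Finset.mem_erase]; omega
  · rw [Finset.disjoint_left]; intro x hx hx'
    simp only [Finset.mem_Icc] at hx hx'; omega

/- definitions used in the computation -/
def gtN (M : ℕ → ℕ → ℤ) (i j h : ℕ) : ℚ := ((M h (j+1) - M i j - (h : ℤ) + (i : ℤ) : ℤ) : ℚ)
def gtP (M : ℕ → ℕ → ℤ) (i j h : ℕ) : ℚ := ((M h (j-1) - M i j - (h : ℤ) + (i : ℤ) - 1 : ℤ) : ℚ)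
def gtD1 (M : ℕ → ℕ → ℤ) (i j h : ℕ) : ℚ := ((M h j - M i j - (h : ℤ) + (i : ℤ) : ℤ) : ℚ)
def gtD2 (M : ℕ → ℕ → ℤ) (i j h : ℕ) : ℚ := ((M h j - M i j - (h : ℤ) + (i : ℤ) - 1 : ℤ) : ℚ)

def gtAl (M : ℕ → ℕ → ℤ) (i j a b : ℕ) : ℚ :=
  if a = i then gtP M i j b / gtD1 M i j (b+1)
  else if b + 1 = i then gtD2 M i j a / gtP M i j a else 1

def gtBe (M : ℕ → ℕ → ℤ) (i j a b : ℕ) : ℚ :=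
  if a = i then (if b = i then -gtN M i j (i+1) / gtN M i j i else gtN M i j (b+1) / gtD2 M i j b)
  else if b = i then gtD1 M i j a / gtN M i j a else 1

def gtI (M : ℕ → ℕ → ℤ) (i j n a b : ℕ) : ℚ :=
  (if j ∈ Finset.Icc (b+1) n then gtAl M i j a b else 1) *
  (if j + 1 ∈ Finset.Icc (b+1) n then gtBe M i j a b else 1)

def gtFac (M : ℕ → ℕ → ℤ) (a b k : ℕ) : ℚ :=
  ((((M a k - M b (k - 1) - (a : ℤ) + (b : ℤ)).toNat.factorial : ℚ) *
    ((M a (k - 1) - M (b + 1) k - (a : ℤ) + (b : ℤ)).toNat.factorial : ℚ)) /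
   (((M a (k - 1) - M b (k - 1) - (a : ℤ) + (b : ℤ)).toNat.factorial : ℚ) *
    ((M a k - M (b + 1) k - (a : ℤ) + (b : ℤ)).toNat.factorial : ℚ)))

lemma rGT_eq_prod_gtFac (n : ℕ) (M : ℕ → ℕ → ℤ) :
    rGT n M = ∏ a ∈ Icc 1 n, ∏ b ∈ Icc a n, ∏ k ∈ Icc (b+1) n, gtFac M a b k := rfl

section mono
variable {n : ℕ} {lam : ℕ → ℤ} {M : ℕ → ℕ → ℤ}

lemma gtRowMono (hM : isGT n lam M) {p p' q : ℕ} (h1 : 1 ≤ p) (h2 : p ≤ p') (h3 : p' ≤ q)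
    (h4 : q ≤ n) : M p' q ≤ M p q := by
  induction p' with
  | zero => omega
  | succ t ih =>
    rcases Nat.eq_or_lt_of_le h2 with h | h
    · exact le_of_eq (by rw [h])
    · have ht : M (t+1) q ≤ M t q := by
        have h5 := (hM.2 t q (by omega) (by omega) h4)
        omega
      have := ih (by omega) (by omega)
      omega

lemma gtColMono (hM : isGT n lam M) {p q : ℕ} (h1 : 1 ≤ p) (h2 : p < q) (h3 : q ≤ n) :
    M p (q-1) ≤ M p q := (hM.2 p q h1 h2 h3).1

lemma gtInterlace (hM : isGT n lam M) {p q : ℕ} (h1 : 1 ≤ p) (h2 : p < q) (h3 : q ≤ n) :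
    M (p+1) q ≤ M p (q-1) := (hM.2 p q h1 h2 h3).2

/- nonnegativity of the four factorial arguments -/
lemma gtArg1 (hM : isGT n lam M) {a b k : ℕ} (h1 : 1 ≤ a) (h2 : a ≤ b) (h3 : b < k)
    (h4 : k ≤ n) : 0 ≤ M a k - M b (k-1) - (a:ℤ) + (b:ℤ) := by
  have e1 : M b (k-1) ≤ M a (k-1) := gtRowMono hM h1 h2 (by omega) (by omega)
  have e2 : M a (k-1) ≤ M a k := gtColMono hM h1 (by omega) h4
  omega

lemma gtArg2 (hM : isGT n lam M) {a b k : ℕ} (h1 : 1 ≤ a) (h2 : a ≤ b) (h3 : b < k)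
    (h4 : k ≤ n) : 0 ≤ M a (k-1) - M (b+1) k - (a:ℤ) + (b:ℤ) := by
  have e1 : M (b+1) k ≤ M b (k-1) := gtInterlace hM (by omega) h3 h4
  have e2 : M b (k-1) ≤ M a (k-1) := gtRowMono hM h1 h2 (by omega) (by omega)
  omega

lemma gtArg3 (hM : isGT n lam M) {a b k : ℕ} (h1 : 1 ≤ a) (h2 : a ≤ b) (h3 : b < k)
    (h4 : k ≤ n) : 0 ≤ M a (k-1) - M b (k-1) - (a:ℤ) + (b:ℤ) := by
  have e1 : M b (k-1) ≤ M a (k-1) := gtRowMono hM h1 h2 (by omega) (by omega)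
  omega

lemma gtArg4 (hM : isGT n lam M) {a b k : ℕ} (h1 : 1 ≤ a) (h2 : a ≤ b) (h3 : b < k)
    (h4 : k ≤ n) : 0 ≤ M a k - M (b+1) k - (a:ℤ) + (b:ℤ) := by
  have e1 : M (b+1) k ≤ M a k := gtRowMono hM h1 (by omega) (by omega) h4
  omega

end mono

lemma prodIccPred (f : ℕ → ℚ) (b : ℕ) :
    ∏ x ∈ Finset.Icc 2 (b+1), f (x-1) = ∏ x ∈ Finset.Icc 1 b, f x := by
  have h := prodIccShift (fun x => f (x-1)) 1 b
  norm_num at h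
  simpa using h

lemma rGT_pos (n : ℕ) (W : ℕ → ℕ → ℤ) : 0 < rGT n W := by
  rw [rGT_eq_prod_gtFac]
  refine Finset.prod_pos fun a _ => Finset.prod_pos fun b _ => Finset.prod_pos fun k _ => ?_
  rw [gtFac]
  have c : ∀ m : ℕ, (0:ℚ) < m.factorial := fun m => by exact_mod_cast m.factorial_pos
  exact div_pos (mul_pos (c _) (c _)) (mul_pos (c _) (c _))

section shapes

lemma qcast_pos_add_one (y : ℤ) (hy : 0 ≤ y) : ((y:ℚ)+1) ≠ 0 := by
  have : (0:ℚ) ≤ (y:ℚ) := by exact_mod_cast hy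
  linarith

lemma qcast_pos (y : ℤ) (hy : 1 ≤ y) : (y:ℚ) ≠ 0 := by
  have : (1:ℚ) ≤ (y:ℚ) := by exact_mod_cast hy
  linarith

lemma factq_ne (m : ℕ) : ((m.factorial : ℚ)) ≠ 0 :=
  Nat.cast_ne_zero.mpr (Nat.factorial_ne_zero m)

/- num1 gets +1, den2 gets +1 -/
lemma shapeA (x y : ℤ) (hx : 0 ≤ x) (hy : 0 ≤ y) (c2 c3 : ℚ) (h2 : c2 ≠ 0) (h3 : c3 ≠ 0) :
    (((x+1).toNat.factorial : ℚ) * c2)/(c3 * ((y+1).toNat.factorial : ℚ)) =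
    ((x.toNat.factorial : ℚ) * c2)/(c3 * (y.toNat.factorial : ℚ)) * (((x:ℚ)+1)/((y:ℚ)+1)) := by
  rw [factCastSucc x hx, factCastSucc y hy]
  have h4 := factq_ne x.toNat
  have h5 := factq_ne y.toNat
  have h6 := qcast_pos_add_one y hy
  push_cast
  field_simp

/- num2 gets -1, den2 gets -1 -/
lemma shapeB (x y : ℤ) (hx : 1 ≤ x) (hy : 1 ≤ y) (c1 c3 : ℚ) (h1 : c1 ≠ 0) (h3 : c3 ≠ 0) :
    (c1 * ((x-1).toNat.factorial : ℚ))/(c3 * ((y-1).toNat.factorial : ℚ)) =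
    (c1 * (x.toNat.factorial : ℚ))/(c3 * (y.toNat.factorial : ℚ)) * ((y:ℚ)/(x:ℚ)) := by
  rw [factCastPred x hx, factCastPred y hy]
  have h4 := factq_ne (x-1).toNat
  have h5 := factq_ne (y-1).toNat
  have h6 := qcast_pos x hx
  have h7 := qcast_pos y hy
  push_cast
  field_simp

/- num1 gets -1, num2 gets +1, denominators untouched -/
lemma shapeC (x y : ℤ) (hx : 1 ≤ x) (hy : 0 ≤ y) (c3 c4 : ℚ) (h3 : c3 ≠ 0) (h4 : c4 ≠ 0) :
    (((x-1).toNat.factorial : ℚ) * ((y+1).toNat.factorial : ℚ))/(c3 * c4) =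
    ((x.toNat.factorial : ℚ) * (y.toNat.factorial : ℚ))/(c3 * c4) * (((y:ℚ)+1)/(x:ℚ)) := by
  rw [factCastPred x hx, factCastSucc y hy]
  have h5 := factq_ne (x-1).toNat
  have h6 := factq_ne y.toNat
  have h7 := qcast_pos x hx
  push_cast
  field_simp

/- num1 gets -1, den1 gets -1 -/
lemma shapeD (x y : ℤ) (hx : 1 ≤ x) (hy : 1 ≤ y) (c2 c4 : ℚ) (h2 : c2 ≠ 0) (h4 : c4 ≠ 0) :
    (((x-1).toNat.factorial : ℚ) * c2)/(((y-1).toNat.factorial : ℚ) * c4) =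
    ((x.toNat.factorial : ℚ) * c2)/((y.toNat.factorial : ℚ) * c4) * ((y:ℚ)/(x:ℚ)) := by
  rw [factCastPred x hx, factCastPred y hy]
  have h5 := factq_ne (x-1).toNat
  have h6 := factq_ne (y-1).toNat
  have h7 := qcast_pos x hx
  have h8 := qcast_pos y hy
  push_cast
  field_simp

/- num2 gets +1, den1 gets +1 -/
lemma shapeE (x y : ℤ) (hx : 0 ≤ x) (hy : 0 ≤ y) (c1 c4 : ℚ) (h1 : c1 ≠ 0) (h4 : c4 ≠ 0) :
    (c1 * ((y+1).toNat.factorial : ℚ))/(((x+1).toNat.factorial : ℚ) * c4) =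
    (c1 * (y.toNat.factorial : ℚ))/((x.toNat.factorial : ℚ) * c4) * (((y:ℚ)+1)/((x:ℚ)+1)) := by
  rw [factCastSucc x hx, factCastSucc y hy]
  have h5 := factq_ne x.toNat
  have h6 := factq_ne y.toNat
  have h7 := qcast_pos_add_one x hx
  push_cast
  field_simp

end shapes

lemma gtFacRatio {n : ℕ} {lam : ℕ → ℤ} {M : ℕ → ℕ → ℤ} {i j : ℕ}
    (hM : isGT n lam M) (hi : 1 ≤ i) (hij : i ≤ j) (hjn : j + 1 ≤ n)
    (hS1 : M i j + 1 ≤ M i (j+1))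
    (hS2 : ∀ h, 1 ≤ h → h + 1 ≤ i → M i j + 1 ≤ M h j)
    (hS3 : ∀ h, 1 ≤ h → h + 1 ≤ i → M i j + 1 ≤ M h (j-1))
    {a b k : ℕ} (ha : 1 ≤ a) (hab : a ≤ b) (hbk : b < k) (hkn : k ≤ n) :
    gtFac (fun p q => M p q + if p = i ∧ q = j then 1 else 0) a b k
      = gtFac M a b k *
        ((if k = j then gtAl M i j a b else 1) * (if k = j + 1 then gtBe M i j a b else 1)) := by
  by_cases hkj : k = j
  · subst hkj
    rw [if_pos rfl, if_neg (by omega : ¬ k = k + 1), mul_one]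
    have hj1 : k - 1 ≠ k := by omega
    by_cases hai : a = i
    · subst hai
      -- family A: ratio ((A1+1)/(A4+1))
      have n1 := gtArg1 hM ha hab hbk hkn
      have n4 := gtArg4 hM ha hab hbk hkn
      rw [gtAl, if_pos rfl]
      have e1 : gtP M a k b = -(((M a k - M b (k-1) - (a:ℤ) + (b:ℤ) : ℤ) : ℚ) + 1) := by
        rw [gtP]; push_cast; ring
      have e2 : gtD1 M a k (b+1) = -(((M a k - M (b+1) k - (a:ℤ) + (b:ℤ) : ℤ) : ℚ) + 1) := by
        rw [gtD1]; push_cast; ring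
      rw [e1, e2, neg_div_neg_eq]
      simp only [gtFac, and_self, and_true, true_and, if_true, hj1,
        (show ¬(b + 1 = a) from by omega), and_false, false_and, if_false, add_zero]
      rw [show M a k + 1 - M b (k-1) - (a:ℤ) + (b:ℤ)
            = (M a k - M b (k-1) - (a:ℤ) + (b:ℤ)) + 1 from by ring,
          show M a k + 1 - M (b+1) k - (a:ℤ) + (b:ℤ)
            = (M a k - M (b+1) k - (a:ℤ) + (b:ℤ)) + 1 from by ring]
      exact shapeA _ _ n1 n4 _ _ (factq_ne _) (factq_ne _)
    · by_cases hbi : b + 1 = i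
      · -- family D
        subst hbi
        have n2 : (1:ℤ) ≤ M a (k-1) - M (b+1) k - (a:ℤ) + (b:ℤ) := by
          have := hS3 a ha (by omega)
          omega
        have n4 : (1:ℤ) ≤ M a k - M (b+1) k - (a:ℤ) + (b:ℤ) := by
          have := hS2 a ha (by omega)
          omega
        rw [gtAl, if_neg hai, if_pos rfl]
        have e1 : gtD2 M (b+1) k a = ((M a k - M (b+1) k - (a:ℤ) + (b:ℤ) : ℤ) : ℚ) := by
          rw [gtD2]; push_cast; ring
        have e2 : gtP M (b+1) k a = ((M a (k-1) - M (b+1) k - (a:ℤ) + (b:ℤ) : ℤ) : ℚ) := by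
          rw [gtP]; push_cast; ring
        rw [e1, e2]
        simp only [gtFac, and_self, and_true, true_and, if_true, hai, hj1,
          and_false, false_and, if_false, add_zero]
        rw [show M a (k-1) - (M (b+1) k + 1) - (a:ℤ) + (b:ℤ)
              = (M a (k-1) - M (b+1) k - (a:ℤ) + (b:ℤ)) - 1 from by ring,
            show M a k - (M (b+1) k + 1) - (a:ℤ) + (b:ℤ)
              = (M a k - M (b+1) k - (a:ℤ) + (b:ℤ)) - 1 from by ring]
        exact shapeB _ _ n2 n4 _ _ (factq_ne _) (factq_ne _)
      · -- unchanged
        rw [gtAl, if_neg hai, if_neg hbi, mul_one]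
        simp only [gtFac, hai, hbi, hj1, and_true, and_false, false_and, if_false, add_zero]
  · by_cases hkj1 : k = j + 1
    · subst hkj1
      rw [if_neg hkj, if_pos rfl, one_mul]
      have hj2 : j + 1 ≠ j := by omega
      by_cases hai : a = i
      · subst hai
        by_cases hbi : b = a
        · subst hbi
          -- special case b = b = i, k = j+1
          have n1 : (1:ℤ) ≤ M b (j+1) - M b j - (b:ℤ) + (b:ℤ) := by omega
          have n2 := gtArg2 hM ha le_rfl hbk hkn
          simp only [Nat.add_sub_cancel] at n2
          rw [gtBe, if_pos rfl, if_pos rfl]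
          have e1 : -gtN M b j (b+1) = ((M b j - M (b+1) (j+1) - (b:ℤ) + (b:ℤ) : ℤ) : ℚ) + 1 := by
            rw [gtN]; push_cast; ring
          have e2 : gtN M b j b = ((M b (j+1) - M b j - (b:ℤ) + (b:ℤ) : ℤ) : ℚ) := rfl
          rw [show gtN M b j (b+1) = -(-gtN M b j (b+1)) from by ring, e1, e2, neg_neg]
          simp only [gtFac, Nat.add_sub_cancel, and_self, and_true, true_and, if_true, hj2,
            (show ¬(b + 1 = b) from by omega), and_false, false_and, if_false, add_zero]
          rw [show M b (j+1) - (M b j + 1) - (b:ℤ) + (b:ℤ)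
                = (M b (j+1) - M b j - (b:ℤ) + (b:ℤ)) - 1 from by ring,
              show M b j + 1 - M (b+1) (j+1) - (b:ℤ) + (b:ℤ)
                = (M b j - M (b+1) (j+1) - (b:ℤ) + (b:ℤ)) + 1 from by ring,
              show M b j + 1 - (M b j + 1) - (b:ℤ) + (b:ℤ)
                = M b j - M b j - (b:ℤ) + (b:ℤ) from by ring]
          exact shapeC _ _ n1 n2 _ _ (factq_ne _) (factq_ne _)
        · -- a = i, b > i, k = j+1
          have n2 := gtArg2 hM ha hab hbk hkn
          have n3 := gtArg3 hM ha hab hbk hkn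
          simp only [Nat.add_sub_cancel] at n2 n3
          rw [gtBe, if_pos rfl, if_neg hbi]
          have e1 : gtN M a j (b+1) = -(((M a j - M (b+1) (j+1) - (a:ℤ) + (b:ℤ) : ℤ) : ℚ) + 1) := by
            rw [gtN]; push_cast; ring
          have e2 : gtD2 M a j b = -(((M a j - M b j - (a:ℤ) + (b:ℤ) : ℤ) : ℚ) + 1) := by
            rw [gtD2]; push_cast; ring
          rw [e1, e2, neg_div_neg_eq]
          simp only [gtFac, Nat.add_sub_cancel, and_self, and_true, true_and, if_true, hbi, hj2,
            (show ¬(b + 1 = a) from by omega), and_false, false_and, if_false, add_zero]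
          rw [show M a j + 1 - M (b+1) (j+1) - (a:ℤ) + (b:ℤ)
                = (M a j - M (b+1) (j+1) - (a:ℤ) + (b:ℤ)) + 1 from by ring,
              show M a j + 1 - M b j - (a:ℤ) + (b:ℤ)
                = (M a j - M b j - (a:ℤ) + (b:ℤ)) + 1 from by ring]
          exact shapeE _ _ n3 n2 _ _ (factq_ne _) (factq_ne _)
      · by_cases hbi : b = i
        · subst hbi
          -- a < i = b, k = j+1
          have n1 : (1:ℤ) ≤ M a (j+1) - M b j - (a:ℤ) + (b:ℤ) := by
            have h1 := hS2 a ha (by omega)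
            have h2 : M a j ≤ M a (j+1) := gtColMono hM ha (by omega) (by omega)
            omega
          have n3 : (1:ℤ) ≤ M a j - M b j - (a:ℤ) + (b:ℤ) := by
            have := hS2 a ha (by omega)
            omega
          rw [gtBe, if_neg hai, if_pos rfl]
          have e1 : gtD1 M b j a = ((M a j - M b j - (a:ℤ) + (b:ℤ) : ℤ) : ℚ) := rfl
          have e2 : gtN M b j a = ((M a (j+1) - M b j - (a:ℤ) + (b:ℤ) : ℤ) : ℚ) := rfl
          rw [e1, e2]
          simp only [gtFac, Nat.add_sub_cancel, and_self, and_true, true_and, if_true, hai, hj2,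
            (show ¬(b + 1 = b) from by omega), and_false, false_and, if_false, add_zero]
          rw [show M a (j+1) - (M b j + 1) - (a:ℤ) + (b:ℤ)
                = (M a (j+1) - M b j - (a:ℤ) + (b:ℤ)) - 1 from by ring,
              show M a j - (M b j + 1) - (a:ℤ) + (b:ℤ)
                = (M a j - M b j - (a:ℤ) + (b:ℤ)) - 1 from by ring]
          exact shapeD _ _ n1 n3 _ _ (factq_ne _) (factq_ne _)
        · -- unchanged
          rw [gtBe, if_neg hai, if_neg hbi, mul_one]
          simp only [gtFac, Nat.add_sub_cancel, hai, hbi, hj2, and_true, and_false,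
            false_and, if_false, add_zero]
    · rw [if_neg hkj, if_neg hkj1, mul_one, mul_one]
      have hk1 : k - 1 ≠ j := by omega
      simp only [gtFac, hkj, hk1, and_true, and_false, false_and, if_false, add_zero]

/-- If both `M` and `M + Δ_{i,j}` lie in `G(λ)` then all the denominators occurring in
`a_{i,j}(M)` and `A_{i,j}(M)` are nonzero, and
`a_{i,j}(M)² ⬝ r(M + Δ_{i,j}) = |A_{i,j}(M)| ⬝ r(M)`. -/
theorem aGT_sq_rGT_eq (n : ℕ) (hn : 2 ≤ n) (lam : ℕ → ℤ)
    (hlam : ∀ p, 1 ≤ p → p < n → lam (p + 1) ≤ lam p)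
    (i j : ℕ) (hi : 1 ≤ i) (hij : i ≤ j) (hj : j ≤ n - 1)
    (M : ℕ → ℕ → ℤ) (hM : isGT n lam M)
    (hM' : isGT n lam (fun p q => M p q + if p = i ∧ q = j then 1 else 0)) :
    (∀ h, 1 ≤ h → h ≤ j → h ≠ i →
      M h j - M i j - (h : ℤ) + (i : ℤ) ≠ 0 ∧
      M h j - M i j - (h : ℤ) + (i : ℤ) - 1 ≠ 0) ∧
    aGT M i j ^ 2 * rGT n (fun p q => M p q + if p = i ∧ q = j then 1 else 0) =
      |AGT M i j| * rGT n M := by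
  have hjn : j + 1 ≤ n := by omega
  -- strict inequalities coming from M + Δ ∈ G(λ)
  have hS1 : M i j + 1 ≤ M i (j + 1) := by
    have h := (hM'.2 i (j+1) hi (by omega) hjn).1
    simp only [Nat.add_sub_cancel, eq_self_iff_true, and_self, and_true, true_and, if_true,
      eq_false (show ¬(j + 1 = j) from by omega), and_false, if_false, add_zero] at h
    exact h
  have hB : 2 ≤ i → M i j + 1 ≤ M (i-1) (j-1) := by
    intro h2
    have h := (hM'.2 (i-1) j (by omega) (by omega) (by omega)).2
    rw [show i - 1 + 1 = i from by omega] at h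
    simp only [eq_self_iff_true, and_self, and_true, true_and, if_true,
      eq_false (show ¬(i - 1 = i) from by omega), false_and, if_false, add_zero] at h
    exact h
  have hS3 : ∀ h, 1 ≤ h → h + 1 ≤ i → M i j + 1 ≤ M h (j-1) := by
    intro h h1 h2
    have hb := hB (by omega)
    have hr : M (i-1) (j-1) ≤ M h (j-1) := gtRowMono hM h1 (by omega) (by omega) (by omega)
    omega
  have hS2 : ∀ h, 1 ≤ h → h + 1 ≤ i → M i j + 1 ≤ M h j := by
    intro h h1 h2
    have hb := hS3 h h1 h2
    have hc : M h (j-1) ≤ M h j := gtColMono hM h1 (by omega) (by omega)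
    omega
  have hU3 : ∀ h, i + 1 ≤ h → h ≤ j → M h j ≤ M i j :=
    fun h h1 h2 => gtRowMono hM hi (by omega) h2 (by omega)
  -- part 1
  have hpart1 : ∀ h, 1 ≤ h → h ≤ j → h ≠ i →
      M h j - M i j - (h : ℤ) + (i : ℤ) ≠ 0 ∧
      M h j - M i j - (h : ℤ) + (i : ℤ) - 1 ≠ 0 := by
    intro h h1 h2 h3
    rcases Nat.lt_or_ge h i with hc | hc
    · have := hS2 h h1 (by omega)
      constructor <;> omega
    · have := hU3 h (by omega) h2
      constructor <;> omega
  -- ratio of the two rGT values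
  have hr : rGT n (fun p q => M p q + if p = i ∧ q = j then 1 else 0)
      = rGT n M * ∏ a ∈ Finset.Icc 1 n, ∏ b ∈ Finset.Icc a n, ∏ k ∈ Finset.Icc (b+1) n,
          ((if k = j then gtAl M i j a b else 1) * (if k = j + 1 then gtBe M i j a b else 1)) := by
    rw [rGT_eq_prod_gtFac, rGT_eq_prod_gtFac, ← Finset.prod_mul_distrib]
    apply Finset.prod_congr rfl
    intro a haa
    rw [← Finset.prod_mul_distrib]
    apply Finset.prod_congr rfl
    intro b hbb
    rw [← Finset.prod_mul_distrib]
    apply Finset.prod_congr rfl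
    intro k hkk
    simp only [Finset.mem_Icc] at haa hbb hkk
    exact gtFacRatio hM hi hij hjn hS1 hS2 hS3 haa.1 hbb.1 (by omega) hkk.2
  have hinner : ∀ a b : ℕ, (∏ k ∈ Finset.Icc (b+1) n,
      ((if k = j then gtAl M i j a b else 1) * (if k = j + 1 then gtBe M i j a b else 1)))
      = gtI M i j n a b := by
    intro a b
    rw [Finset.prod_mul_distrib, gtI,
        Finset.prod_ite_eq' (Finset.Icc (b+1) n) j (fun _ => gtAl M i j a b),
        Finset.prod_ite_eq' (Finset.Icc (b+1) n) (j+1) (fun _ => gtBe M i j a b)]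
  have hmid_lt : ∀ a, 1 ≤ a → a + 1 ≤ i →
      (∏ b ∈ Finset.Icc a n, gtI M i j n a b)
      = (gtD2 M i j a * gtD1 M i j a) / (gtP M i j a * gtN M i j a) := by
    intro a h1 h2
    have e1 : ∀ b, (if j ∈ Finset.Icc (b+1) n then gtAl M i j a b else 1)
        = (if b = i - 1 then gtD2 M i j a / gtP M i j a else 1) := by
      intro b
      by_cases hb : b = i - 1
      · rw [if_pos hb,
            if_pos (show j ∈ Finset.Icc (b+1) n by simp only [Finset.mem_Icc]; omega), gtAl,
            if_neg (show ¬ a = i by omega), if_pos (show b + 1 = i by omega)]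
      · rw [if_neg hb, gtAl, if_neg (show ¬ a = i by omega),
            if_neg (show ¬ b + 1 = i by omega), ite_self]
    have e2 : ∀ b, (if j + 1 ∈ Finset.Icc (b+1) n then gtBe M i j a b else 1)
        = (if b = i then gtD1 M i j a / gtN M i j a else 1) := by
      intro b
      by_cases hb : b = i
      · rw [if_pos hb,
            if_pos (show j + 1 ∈ Finset.Icc (b+1) n by simp only [Finset.mem_Icc]; omega), gtBe,
            if_neg (show ¬ a = i by omega), if_pos hb]
      · rw [if_neg hb, gtBe, if_neg (show ¬ a = i by omega), if_neg hb, ite_self]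
    simp only [gtI]
    rw [Finset.prod_mul_distrib,
        Finset.prod_congr rfl (fun b _ => e1 b), Finset.prod_congr rfl (fun b _ => e2 b),
        Finset.prod_ite_eq' (Finset.Icc a n) (i-1) (fun _ => gtD2 M i j a / gtP M i j a),
        Finset.prod_ite_eq' (Finset.Icc a n) i (fun _ => gtD1 M i j a / gtN M i j a),
        if_pos (show i - 1 ∈ Finset.Icc a n by simp only [Finset.mem_Icc]; omega),
        if_pos (show i ∈ Finset.Icc a n by simp only [Finset.mem_Icc]; omega),
        div_mul_div_comm]
  have hmid_gt : ∀ a, i + 1 ≤ a → (∏ b ∈ Finset.Icc a n, gtI M i j n a b) = 1 := by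
    intro a h1
    apply Finset.prod_eq_one
    intro b hb
    simp only [Finset.mem_Icc] at hb
    rw [gtI, gtAl, gtBe, if_neg (show ¬ a = i by omega), if_neg (show ¬ a = i by omega),
        if_neg (show ¬ b + 1 = i by omega), if_neg (show ¬ b = i by omega), ite_self, ite_self,
        mul_one]
  have hmid_i : (∏ b ∈ Finset.Icc i n, gtI M i j n i b)
      = ((∏ b ∈ Finset.Icc i (j-1), gtP M i j b) / (∏ b ∈ Finset.Icc (i+1) j, gtD1 M i j b)) *
        ((-gtN M i j (i+1) / gtN M i j i) *
         ((∏ b ∈ Finset.Icc (i+1+1) (j+1), gtN M i j b) /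
          (∏ b ∈ Finset.Icc (i+1) j, gtD2 M i j b))) := by
    simp only [gtI]
    rw [Finset.prod_mul_distrib]
    congr 1
    · rw [← Finset.prod_filter]
      have hfil : (Finset.Icc i n).filter (fun b => j ∈ Finset.Icc (b+1) n)
          = Finset.Icc i (j-1) := by
        ext b; simp only [Finset.mem_filter, Finset.mem_Icc]; omega
      rw [hfil]
      have e3 : ∀ b ∈ Finset.Icc i (j-1), gtAl M i j i b = gtP M i j b / gtD1 M i j (b+1) :=
        fun b _ => by rw [gtAl, if_pos rfl]
      rw [Finset.prod_congr rfl e3, Finset.prod_div_distrib]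
      congr 1
      have hsh := prodIccShift (gtD1 M i j) i (j-1)
      rw [show j - 1 + 1 = j from by omega] at hsh
      exact hsh.symm
    · rw [← Finset.prod_filter]
      have hfil : (Finset.Icc i n).filter (fun b => j + 1 ∈ Finset.Icc (b+1) n)
          = Finset.Icc i j := by
        ext b; simp only [Finset.mem_filter, Finset.mem_Icc]; omega
      rw [hfil,
          prodIccSplit (gtBe M i j i) (show i ≤ i + 1 from by omega) hij,
          Finset.Icc_self, Finset.prod_singleton]
      congr 1
      · rw [gtBe, if_pos rfl, if_pos rfl]
      · have e4 : ∀ b ∈ Finset.Icc (i+1) j, gtBe M i j i b = gtN M i j (b+1) / gtD2 M i j b := by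
          intro b hb; simp only [Finset.mem_Icc] at hb
          rw [gtBe, if_pos rfl, if_neg (show ¬ b = i by omega)]
        rw [Finset.prod_congr rfl e4, Finset.prod_div_distrib]
        congr 1
        exact (prodIccShift (gtN M i j) (i+1) j).symm
  -- outer split of the correction product
  have hsplit : (∏ a ∈ Finset.Icc 1 n, ∏ b ∈ Finset.Icc a n, gtI M i j n a b)
      = (∏ a ∈ Finset.Icc 1 (i-1),
          ((gtD2 M i j a * gtD1 M i j a) / (gtP M i j a * gtN M i j a))) *
        (∏ b ∈ Finset.Icc i n, gtI M i j n i b) := by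
    rw [prodIccSplit (fun a => ∏ b ∈ Finset.Icc a n, gtI M i j n a b)
          (show (1:ℕ) ≤ (i-1)+1 from by omega) (show i - 1 ≤ n from by omega),
        show i - 1 + 1 = i from by omega,
        prodIccSplit (fun a => ∏ b ∈ Finset.Icc a n, gtI M i j n a b)
          (show i ≤ i + 1 from by omega) (show i ≤ n from by omega),
        Finset.Icc_self, Finset.prod_singleton]
    have c1 : ∏ a ∈ Finset.Icc (i+1) n, (∏ b ∈ Finset.Icc a n, gtI M i j n a b) = 1 :=
      Finset.prod_eq_one fun a ha => hmid_gt a (by simp only [Finset.mem_Icc] at ha; omega)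
    have c2 : ∏ a ∈ Finset.Icc 1 (i-1), (∏ b ∈ Finset.Icc a n, gtI M i j n a b)
        = ∏ a ∈ Finset.Icc 1 (i-1),
            ((gtD2 M i j a * gtD1 M i j a) / (gtP M i j a * gtN M i j a)) :=
      Finset.prod_congr rfl fun a ha => by
        simp only [Finset.mem_Icc] at ha; exact hmid_lt a ha.1 (by omega)
    rw [c1, c2, mul_one]
  -- the full correction factor
  have hTeq : (∏ a ∈ Finset.Icc 1 n, ∏ b ∈ Finset.Icc a n, ∏ k ∈ Finset.Icc (b+1) n,
        ((if k = j then gtAl M i j a b else 1) * (if k = j + 1 then gtBe M i j a b else 1)))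
      = ((∏ h ∈ Finset.Icc 1 (i-1), gtD2 M i j h) * (∏ h ∈ Finset.Icc 1 (i-1), gtD1 M i j h))
          / ((∏ h ∈ Finset.Icc 1 (i-1), gtP M i j h) * (∏ h ∈ Finset.Icc 1 (i-1), gtN M i j h)) *
        (((∏ h ∈ Finset.Icc i (j-1), gtP M i j h) / (∏ h ∈ Finset.Icc (i+1) j, gtD1 M i j h)) *
         ((-gtN M i j (i+1) / gtN M i j i) *
          ((∏ h ∈ Finset.Icc (i+1+1) (j+1), gtN M i j h) /
           (∏ h ∈ Finset.Icc (i+1) j, gtD2 M i j h)))) := by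
    rw [Finset.prod_congr rfl (fun a _ => Finset.prod_congr rfl (fun b _ => hinner a b)), hsplit,
        hmid_i, Finset.prod_div_distrib, Finset.prod_mul_distrib, Finset.prod_mul_distrib]
  -- sign facts
  have hNpos : ∀ h, 1 ≤ h → h ≤ i → (0:ℚ) < gtN M i j h := by
    intro h h1 h2
    have key : M i j + 1 ≤ M h (j+1) := by
      rcases Nat.lt_or_ge h i with hc | hc
      · have e1 := hS2 h h1 (by omega)
        have e2 : M h j ≤ M h (j+1) := gtColMono hM h1 (by omega) (by omega)
        omega
      · have hhi : h = i := by omega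
        rw [hhi]; exact hS1
    rw [gtN]
    exact_mod_cast (show (0:ℤ) < M h (j+1) - M i j - (h:ℤ) + (i:ℤ) from by omega)
  have hNneg : ∀ h, i + 1 ≤ h → h ≤ j + 1 → gtN M i j h < 0 := by
    intro h h1 h2
    have e1 : M h (j+1) ≤ M (h-1) j := by
      have e := gtInterlace hM (p := h-1) (q := j+1) (by omega) (by omega) (by omega)
      rw [show h - 1 + 1 = h from by omega] at e
      simpa using e
    have e2 : M (h-1) j ≤ M i j := gtRowMono hM hi (by omega) (by omega) (by omega)
    rw [gtN]
    exact_mod_cast (show M h (j+1) - M i j - (h:ℤ) + (i:ℤ) < 0 from by omega)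
  have hPpos : ∀ h, 1 ≤ h → h + 1 ≤ i → (0:ℚ) < gtP M i j h := by
    intro h h1 h2
    have e1 := hS3 h h1 h2
    rw [gtP]
    exact_mod_cast (show (0:ℤ) < M h (j-1) - M i j - (h:ℤ) + (i:ℤ) - 1 from by omega)
  have hPneg : ∀ h, i ≤ h → h ≤ j - 1 → gtP M i j h < 0 := by
    intro h h1 h2
    have e1 : M h (j-1) ≤ M i (j-1) := gtRowMono hM hi h1 (by omega) (by omega)
    have e2 : M i (j-1) ≤ M i j := gtColMono hM hi (by omega) (by omega)
    rw [gtP]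
    exact_mod_cast (show M h (j-1) - M i j - (h:ℤ) + (i:ℤ) - 1 < 0 from by omega)
  have hD1pos : ∀ h, 1 ≤ h → h + 1 ≤ i → (0:ℚ) < gtD1 M i j h := by
    intro h h1 h2
    have e1 := hS2 h h1 h2
    rw [gtD1]
    exact_mod_cast (show (0:ℤ) < M h j - M i j - (h:ℤ) + (i:ℤ) from by omega)
  have hD1neg : ∀ h, i + 1 ≤ h → h ≤ j → gtD1 M i j h < 0 := by
    intro h h1 h2
    have e1 := hU3 h h1 h2
    rw [gtD1]
    exact_mod_cast (show M h j - M i j - (h:ℤ) + (i:ℤ) < 0 from by omega)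
  have hD2pos : ∀ h, 1 ≤ h → h + 1 ≤ i → (0:ℚ) < gtD2 M i j h := by
    intro h h1 h2
    have e1 := hS2 h h1 h2
    rw [gtD2]
    exact_mod_cast (show (0:ℤ) < M h j - M i j - (h:ℤ) + (i:ℤ) - 1 from by omega)
  have hD2neg : ∀ h, i + 1 ≤ h → h ≤ j → gtD2 M i j h < 0 := by
    intro h h1 h2
    have e1 := hU3 h h1 h2
    rw [gtD2]
    exact_mod_cast (show M h j - M i j - (h:ℤ) + (i:ℤ) - 1 < 0 from by omega)
  -- nonvanishing of the atomic products
  have hq1 : (∏ h ∈ Finset.Icc 1 (i-1), gtN M i j h) ≠ 0 :=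
    Finset.prod_ne_zero_iff.mpr fun h hh => by
      simp only [Finset.mem_Icc] at hh; exact ne_of_gt (hNpos h hh.1 (by omega))
  have hq2 : gtN M i j i ≠ 0 := ne_of_gt (hNpos i hi le_rfl)
  have hr1 : (∏ h ∈ Finset.Icc 1 (i-1), gtP M i j h) ≠ 0 :=
    Finset.prod_ne_zero_iff.mpr fun h hh => by
      simp only [Finset.mem_Icc] at hh; exact ne_of_gt (hPpos h hh.1 (by omega))
  have hs1 : (∏ h ∈ Finset.Icc 1 (i-1), gtD1 M i j h) ≠ 0 :=
    Finset.prod_ne_zero_iff.mpr fun h hh => by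
      simp only [Finset.mem_Icc] at hh; exact ne_of_gt (hD1pos h hh.1 (by omega))
  have hu1 : (∏ h ∈ Finset.Icc 1 (i-1), gtD2 M i j h) ≠ 0 :=
    Finset.prod_ne_zero_iff.mpr fun h hh => by
      simp only [Finset.mem_Icc] at hh; exact ne_of_gt (hD2pos h hh.1 (by omega))
  have hs2 : (∏ h ∈ Finset.Icc (i+1) j, gtD1 M i j h) ≠ 0 :=
    Finset.prod_ne_zero_iff.mpr fun h hh => by
      simp only [Finset.mem_Icc] at hh; exact ne_of_lt (hD1neg h hh.1 hh.2)
  have hu2 : (∏ h ∈ Finset.Icc (i+1) j, gtD2 M i j h) ≠ 0 :=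
    Finset.prod_ne_zero_iff.mpr fun h hh => by
      simp only [Finset.mem_Icc] at hh; exact ne_of_lt (hD2neg h hh.1 hh.2)
  -- rewrite aGT in terms of the atoms
  have haG : aGT M i j
      = (((∏ h ∈ Finset.Icc 1 (i-1), gtN M i j h) * gtN M i j i)
          / (∏ h ∈ Finset.Icc 1 (i-1), gtD1 M i j h)) *
        ((∏ h ∈ Finset.Icc 1 (i-1), gtP M i j h) / (∏ h ∈ Finset.Icc 1 (i-1), gtD2 M i j h)) := by
    have e0 : aGT M i j
        = ((∏ h ∈ Finset.Icc 1 i, gtN M i j h) / (∏ h ∈ Finset.Icc 1 (i-1), gtD1 M i j h)) *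
          (∏ h ∈ Finset.Icc 2 i,
            (((M (h - 1) (j - 1) - M i j - (h : ℤ) + (i : ℤ) : ℤ) : ℚ) /
             ((M (h - 1) j - M i j - (h : ℤ) + (i : ℤ) : ℤ) : ℚ))) := rfl
    rw [e0]
    have e1 : (∏ h ∈ Finset.Icc 1 i, gtN M i j h)
        = (∏ h ∈ Finset.Icc 1 (i-1), gtN M i j h) * gtN M i j i := by
      rw [prodIccSplit (gtN M i j) (show (1:ℕ) ≤ (i-1)+1 from by omega)
            (show i - 1 ≤ i from by omega),
          show i - 1 + 1 = i from by omega, Finset.Icc_self, Finset.prod_singleton]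
    have e2 : (∏ h ∈ Finset.Icc 2 i,
          (((M (h - 1) (j - 1) - M i j - (h : ℤ) + (i : ℤ) : ℤ) : ℚ) /
           ((M (h - 1) j - M i j - (h : ℤ) + (i : ℤ) : ℤ) : ℚ)))
        = (∏ h ∈ Finset.Icc 1 (i-1), gtP M i j h) / (∏ h ∈ Finset.Icc 1 (i-1), gtD2 M i j h) := by
      have e5 : ∀ h ∈ Finset.Icc 2 i,
          (((M (h - 1) (j - 1) - M i j - (h : ℤ) + (i : ℤ) : ℤ) : ℚ) /
           ((M (h - 1) j - M i j - (h : ℤ) + (i : ℤ) : ℤ) : ℚ))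
          = gtP M i j (h-1) / gtD2 M i j (h-1) := by
        intro h hh
        simp only [Finset.mem_Icc] at hh
        have c2 : (M (h - 1) (j - 1) - M i j - (h : ℤ) + (i : ℤ))
            = (M (h-1) (j-1) - M i j - ((h-1 : ℕ) : ℤ) + (i:ℤ) - 1) := by omega
        have c3 : (M (h - 1) j - M i j - (h : ℤ) + (i : ℤ))
            = (M (h-1) j - M i j - ((h-1 : ℕ) : ℤ) + (i:ℤ) - 1) := by omega
        rw [gtP, gtD2, c2, c3]
      rw [Finset.prod_congr rfl e5, Finset.prod_div_distrib]
      have hsh1 := prodIccPred (gtP M i j) (i-1)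
      have hsh2 := prodIccPred (gtD2 M i j) (i-1)
      rw [show i - 1 + 1 = i from by omega] at hsh1 hsh2
      rw [hsh1, hsh2]
    rw [e1, e2]
  -- rewrite AGT in terms of the atoms
  have hAG : AGT M i j
      = (((∏ h ∈ Finset.Icc 1 (i-1), gtN M i j h) * (gtN M i j i *
           (gtN M i j (i+1) * (∏ h ∈ Finset.Icc (i+1+1) (j+1), gtN M i j h)))) *
         ((∏ h ∈ Finset.Icc 1 (i-1), gtP M i j h) * (∏ h ∈ Finset.Icc i (j-1), gtP M i j h)))
        / (((∏ h ∈ Finset.Icc 1 (i-1), gtD1 M i j h) * (∏ h ∈ Finset.Icc 1 (i-1), gtD2 M i j h)) *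
           ((∏ h ∈ Finset.Icc (i+1) j, gtD1 M i j h) * (∏ h ∈ Finset.Icc (i+1) j, gtD2 M i j h))) := by
    have e0 : AGT M i j
        = ((∏ h ∈ Finset.Icc 1 (j+1), gtN M i j h) * (∏ h ∈ Finset.Icc 1 (j-1), gtP M i j h))
          / (∏ h ∈ (Finset.Icc 1 j).erase i, (gtD1 M i j h * gtD2 M i j h)) := rfl
    rw [e0]
    have e1 : (∏ h ∈ Finset.Icc 1 (j+1), gtN M i j h)
        = (∏ h ∈ Finset.Icc 1 (i-1), gtN M i j h) * (gtN M i j i *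
            (gtN M i j (i+1) * (∏ h ∈ Finset.Icc (i+1+1) (j+1), gtN M i j h))) := by
      rw [prodIccSplit (gtN M i j) (show (1:ℕ) ≤ (i-1)+1 from by omega)
            (show i - 1 ≤ j + 1 from by omega),
          show i - 1 + 1 = i from by omega,
          prodIccSplit (gtN M i j) (show i ≤ i + 1 from by omega) (show i ≤ j + 1 from by omega),
          Finset.Icc_self, Finset.prod_singleton,
          prodIccSplit (gtN M i j) (show i + 1 ≤ (i+1) + 1 from by omega)
            (show i + 1 ≤ j + 1 from by omega),
          Finset.Icc_self, Finset.prod_singleton]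
    have e2 : (∏ h ∈ Finset.Icc 1 (j-1), gtP M i j h)
        = (∏ h ∈ Finset.Icc 1 (i-1), gtP M i j h) * (∏ h ∈ Finset.Icc i (j-1), gtP M i j h) := by
      rw [prodIccSplit (gtP M i j) (show (1:ℕ) ≤ (i-1)+1 from by omega)
            (show i - 1 ≤ j - 1 from by omega),
          show i - 1 + 1 = i from by omega]
    have e3 : (∏ h ∈ (Finset.Icc 1 j).erase i, (gtD1 M i j h * gtD2 M i j h))
        = ((∏ h ∈ Finset.Icc 1 (i-1), gtD1 M i j h) * (∏ h ∈ Finset.Icc 1 (i-1), gtD2 M i j h)) *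
          ((∏ h ∈ Finset.Icc (i+1) j, gtD1 M i j h) * (∏ h ∈ Finset.Icc (i+1) j, gtD2 M i j h)) := by
      rw [prodEraseSplit (fun h => gtD1 M i j h * gtD2 M i j h) hi hij,
          Finset.prod_mul_distrib, Finset.prod_mul_distrib]
    rw [e1, e2, e3]
  -- the key algebraic identity
  have key : aGT M i j ^ 2 *
      (((∏ h ∈ Finset.Icc 1 (i-1), gtD2 M i j h) * (∏ h ∈ Finset.Icc 1 (i-1), gtD1 M i j h))
          / ((∏ h ∈ Finset.Icc 1 (i-1), gtP M i j h) * (∏ h ∈ Finset.Icc 1 (i-1), gtN M i j h)) *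
        (((∏ h ∈ Finset.Icc i (j-1), gtP M i j h) / (∏ h ∈ Finset.Icc (i+1) j, gtD1 M i j h)) *
         ((-gtN M i j (i+1) / gtN M i j i) *
          ((∏ h ∈ Finset.Icc (i+1+1) (j+1), gtN M i j h) /
           (∏ h ∈ Finset.Icc (i+1) j, gtD2 M i j h)))))
      = - AGT M i j := by
    rw [haG, hAG]
    field_simp
  -- positivity of the correction factor
  have hTpos : (0:ℚ) <
      ((∏ h ∈ Finset.Icc 1 (i-1), gtD2 M i j h) * (∏ h ∈ Finset.Icc 1 (i-1), gtD1 M i j h))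
          / ((∏ h ∈ Finset.Icc 1 (i-1), gtP M i j h) * (∏ h ∈ Finset.Icc 1 (i-1), gtN M i j h)) *
        (((∏ h ∈ Finset.Icc i (j-1), gtP M i j h) / (∏ h ∈ Finset.Icc (i+1) j, gtD1 M i j h)) *
         ((-gtN M i j (i+1) / gtN M i j i) *
          ((∏ h ∈ Finset.Icc (i+1+1) (j+1), gtN M i j h) /
           (∏ h ∈ Finset.Icc (i+1) j, gtD2 M i j h)))) := by
    have h0 : (0:ℚ) < rGT n M *
        (((∏ h ∈ Finset.Icc 1 (i-1), gtD2 M i j h) * (∏ h ∈ Finset.Icc 1 (i-1), gtD1 M i j h))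
            / ((∏ h ∈ Finset.Icc 1 (i-1), gtP M i j h) * (∏ h ∈ Finset.Icc 1 (i-1), gtN M i j h)) *
          (((∏ h ∈ Finset.Icc i (j-1), gtP M i j h) / (∏ h ∈ Finset.Icc (i+1) j, gtD1 M i j h)) *
           ((-gtN M i j (i+1) / gtN M i j i) *
            ((∏ h ∈ Finset.Icc (i+1+1) (j+1), gtN M i j h) /
             (∏ h ∈ Finset.Icc (i+1) j, gtD2 M i j h))))) := by
      rw [hTeq] at hr
      rw [← hr]
      exact rGT_pos n _
    rcases mul_pos_iff.mp h0 with ⟨_, hpos⟩ | ⟨hneg, _⟩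
    · exact hpos
    · exact absurd (rGT_pos n M) (by linarith)
  refine ⟨hpart1, ?_⟩
  have hAneg : AGT M i j ≤ 0 := by
    have h1 := mul_nonneg (sq_nonneg (aGT M i j)) hTpos.le
    rw [key] at h1
    linarith
  rw [abs_of_nonpos hAneg, hr, hTeq]
  linear_combination (rGT n M) * key
end

section
/- For all integers n ≥ 2 and 1 ≤ l ≤ n−1, setting h = min(l, n−l), the identity n · C(n, l) = C(n, l+1) + C(n, l−1) + (n+2) · n! / ((h+1) · (n+1−h) · (n−1−h)! · (h−1)!) holds, where C(n, k) denotes the binomial coefficient. -/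
lemma cast_add_choose (a b : ℕ) :
    (((a + b).choose b : ℚ)) = ((a + b).factorial : ℚ) / (a.factorial * b.factorial) := by
  have h := Nat.add_choose_mul_factorial_mul_factorial a b
  rw [eq_div_iff (by positivity)]
  push_cast [← h]; ring

lemma aux_identity (L M : ℕ) :
    ((L + M + 2 : ℕ) : ℚ) * (((L + M + 2).choose (L + 1) : ℚ)) =
      (((L + M + 2).choose (L + 2) : ℚ)) + (((L + M + 2).choose L : ℚ)) +
        (((L + M + 2 : ℕ) : ℚ) + 2) * (((L + M + 2).factorial : ℚ)) /
          (((L : ℚ) + 2) * ((M : ℚ) + 2) * (M.factorial : ℚ) * (L.factorial : ℚ)) := by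
  have c1 : (((L + M + 2).choose (L + 1) : ℚ)) =
      ((L + M + 2).factorial : ℚ) / ((M + 1).factorial * (L + 1).factorial) := by
    have h2 : L + M + 2 = (M + 1) + (L + 1) := by ring
    rw [h2]; exact cast_add_choose (M + 1) (L + 1)
  have c2 : (((L + M + 2).choose (L + 2) : ℚ)) =
      ((L + M + 2).factorial : ℚ) / (M.factorial * (L + 2).factorial) := by
    have h2 : L + M + 2 = M + (L + 2) := by ring
    rw [h2]; exact cast_add_choose M (L + 2)
  have c3 : (((L + M + 2).choose L : ℚ)) =
      ((L + M + 2).factorial : ℚ) / ((M + 2).factorial * L.factorial) := by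
    have h2 : L + M + 2 = (M + 2) + L := by ring
    rw [h2]; exact cast_add_choose (M + 2) L
  rw [c1, c2, c3]
  have hL : (L.factorial : ℚ) ≠ 0 := by positivity
  have hM : (M.factorial : ℚ) ≠ 0 := by positivity
  simp only [Nat.factorial_succ]
  push_cast
  field_simp
  ring

/-- The dimension-count identity underlying the decomposition of `⋀^l(ℂ^n) ⊗ ℂ^n` as an
`SO(n)`-module: for `2 ≤ n`, `1 ≤ l ≤ n−1` and `h = min(l, n−l)`,
`n·C(n,l) = C(n,l+1) + C(n,l−1) + (n+2)·n! / ((h+1)(n+1−h)(n−1−h)!(h−1)!)`. -/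
theorem dim_count_identity (n l h : ℕ) (hn : 2 ≤ n) (hl1 : 1 ≤ l) (hl2 : l ≤ n - 1)
    (hh : h = min l (n - l)) :
    (n : ℚ) * (n.choose l : ℚ) =
      (n.choose (l + 1) : ℚ) + (n.choose (l - 1) : ℚ) +
        ((n : ℚ) + 2) * (n.factorial : ℚ) /
          (((h : ℚ) + 1) * ((n + 1 - h : ℕ) : ℚ) *
            ((n - 1 - h).factorial : ℚ) * ((h - 1).factorial : ℚ)) := by
  obtain ⟨L, rfl⟩ : ∃ L, l = L + 1 := ⟨l - 1, by omega⟩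
  obtain ⟨M, rfl⟩ : ∃ M, n = L + M + 2 := ⟨n - L - 2, by omega⟩
  rcases le_total L M with hLM | hML
  · have hhl : h = L + 1 := by omega
    subst hhl
    have e1 : L + M + 2 + 1 - (L + 1) = M + 2 := by omega
    have e2 : L + M + 2 - 1 - (L + 1) = M := by omega
    have e3 : L + 1 - 1 = L := by omega
    have e4 : L + 1 + 1 = L + 2 := by omega
    rw [e1, e2, e3, e4]
    have A := aux_identity L M
    push_cast at A ⊢
    linear_combination A
  · have hhl : h = M + 1 := by omega
    subst hhl
    have e1 : L + M + 2 + 1 - (M + 1) = L + 2 := by omega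
    have e2 : L + M + 2 - 1 - (M + 1) = L := by omega
    have e3 : M + 1 - 1 = M := by omega
    have e4 : L + 1 + 1 = L + 2 := by omega
    have e5 : L + 1 - 1 = L := by omega
    rw [e1, e2, e3, e4, e5]
    have A := aux_identity L M
    push_cast at A ⊢
    linear_combination A
end
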